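/- arXiv:1810.09746 — 7 statements merged into one kernel-verified Lean document; each statement's English description precedes it below -/
import Mathlib

section
/- (C-bound) For binary classification, if the first moment of the margin M_ρ is strictly positive, then the expected loss of the ρ-weighted majority vote satisfies L(MV_ρ) ≤ 1 − M_ρ²/M_{ρ²}. -/
open MeasureTheory Finset

/-- The C-bound: in binary classification, if the first moment of the margin is
strictly positive, then the loss of the ρ-weighted majority vote satisfies
`L(MV_ρ) ≤ 1 - M_ρ² / M_{ρ²}`. -/
theorem c_bound
    (X : Type*) [MeasurableSpace X]
    (μ : Measure (X × ℝ)) [IsProbabilityMeasure μ]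
    (H : Type*) [Fintype H]
    (hyp : H → X → ℝ) (hmeas : ∀ h, Measurable (hyp h))
    (hval : ∀ h x, hyp h x = 1 ∨ hyp h x = -1)
    (hlab : ∀ᵐ p ∂μ, p.2 = 1 ∨ p.2 = -1)
    (ρ : H → ℝ) (hρ0 : ∀ h, 0 ≤ ρ h) (hρ1 : ∑ h, ρ h = 1)
    (hpos : 0 < ∫ p, p.2 * ∑ h, ρ h * hyp h p.1 ∂μ) :
    (μ {p | p.2 * ∑ h, ρ h * hyp h p.1 ≤ 0}).toReal ≤
      1 - (∫ p, p.2 * ∑ h, ρ h * hyp h p.1 ∂μ) ^ 2 /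
        (∫ p, (p.2 * ∑ h, ρ h * hyp h p.1) ^ 2 ∂μ) := by
  set M : X × ℝ → ℝ := fun p => p.2 * ∑ h, ρ h * hyp h p.1 with hMdef
  have hM : Measurable M := by
    apply measurable_snd.mul
    exact Finset.measurable_sum _ fun h _ => ((hmeas h).comp measurable_fst).const_mul _
  -- a.e. bound |M| ≤ 1
  have hbound : ∀ᵐ p ∂μ, ‖M p‖ ≤ 1 := by
    filter_upwards [hlab] with p hp
    have h2 : |p.2| = 1 := by rcases hp with h | h <;> simp [h]
    have hsum : |∑ h, ρ h * hyp h p.1| ≤ 1 := by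
      calc |∑ h, ρ h * hyp h p.1| ≤ ∑ h, |ρ h * hyp h p.1| := Finset.abs_sum_le_sum_abs _ _
        _ ≤ ∑ h, ρ h := by
            apply Finset.sum_le_sum
            intro h _
            rw [abs_mul, abs_of_nonneg (hρ0 h)]
            rcases hval h p.1 with hv | hv <;> simp [hv]
        _ = 1 := hρ1
    calc ‖M p‖ = |p.2| * |∑ h, ρ h * hyp h p.1| := by rw [hMdef]; simp [abs_mul]
      _ ≤ 1 := by rw [h2, one_mul]; exact hsum
  have hM2 : MemLp M 2 μ := MemLp.of_bound hM.aestronglyMeasurable 1 hbound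
  have hMint : Integrable M μ := hM2.integrable (by norm_num)
  have hM2int : Integrable (fun p => M p ^ 2) μ := by
    simpa [sq] using hM2.integrable_sq
  set A : Set (X × ℝ) := {p | M p ≤ 0} with hAdef
  have hAmeas : MeasurableSet A := hM measurableSet_Iic
  set f : X × ℝ → ℝ := fun p => max (M p) 0 with hfdef
  set g : X × ℝ → ℝ := Aᶜ.indicator 1 with hgdef
  have hf_nonneg : ∀ p, 0 ≤ f p := fun p => le_max_right _ _
  have hg_nonneg : ∀ p, 0 ≤ g p := fun p => Set.indicator_nonneg (by intro _ _; norm_num) p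
  have hfg : ∀ p, f p * g p = f p := by
    intro p
    by_cases hp : p ∈ A
    · have hfp : f p = 0 := max_eq_right hp
      simp [hfp]
    · have hgp : g p = 1 := by simp [hgdef, Set.indicator, hp]
      simp [hgp]
  have hf2 : MemLp f 2 μ := by
    apply MemLp.of_bound (hM.max measurable_const).aestronglyMeasurable 1
    filter_upwards [hbound] with p hp
    rw [Real.norm_eq_abs, abs_of_nonneg (hf_nonneg p)]
    exact max_le (le_trans (le_abs_self _) hp) zero_le_one
  have hg2 : MemLp g 2 μ := by
    apply MemLp.of_bound ((measurable_one.indicator hAmeas.compl).aestronglyMeasurable) 1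
    apply Filter.Eventually.of_forall
    intro p
    rw [Real.norm_eq_abs, abs_of_nonneg (hg_nonneg p)]
    exact Set.indicator_le_self' (by intro _ _; norm_num) p
  -- Cauchy-Schwarz
  have hconj : Real.HolderConjugate 2 2 := by constructor <;> norm_num
  have hCS := integral_mul_le_Lp_mul_Lq_of_nonneg hconj
    (Filter.Eventually.of_forall hf_nonneg) (Filter.Eventually.of_forall hg_nonneg)
    (by simpa using hf2) (by simpa using hg2)
  -- rewrite rpow powers as natural squares
  have hfpow : ∀ p, f p ^ (2:ℝ) = f p ^ 2 := fun p => by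
    rw [show ((2:ℝ)) = ((2:ℕ):ℝ) by norm_num, Real.rpow_natCast]
  have hgpow : ∀ p, g p ^ (2:ℝ) = g p := fun p => by
    rw [show ((2:ℝ)) = ((2:ℕ):ℝ) by norm_num, Real.rpow_natCast]
    by_cases hp : p ∈ Aᶜ
    · simp [hgdef, Set.indicator_of_mem hp]
    · simp [hgdef, Set.indicator_of_notMem hp]
  have hintg : ∫ p, g p ∂μ = (μ Aᶜ).toReal := by
    rw [hgdef]
    simpa [Measure.real] using integral_indicator_one hAmeas.compl
  have hmain : ∫ p, M p ∂μ ≤ (∫ p, f p ^ 2 ∂μ) ^ ((1:ℝ)/2) * ((μ Aᶜ).toReal) ^ ((1:ℝ)/2) := by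
    have h1 : ∫ p, M p ∂μ ≤ ∫ p, f p ∂μ := by
      apply integral_mono hMint (hf2.integrable (by norm_num))
      intro p; exact le_max_left _ _
    calc ∫ p, M p ∂μ ≤ ∫ p, f p ∂μ := h1
      _ = ∫ p, f p * g p ∂μ := by simp [hfg]
      _ ≤ (∫ p, f p ^ (2:ℝ) ∂μ) ^ ((1:ℝ)/2) * (∫ p, g p ^ (2:ℝ) ∂μ) ^ ((1:ℝ)/2) := hCS
      _ = (∫ p, f p ^ 2 ∂μ) ^ ((1:ℝ)/2) * ((μ Aᶜ).toReal) ^ ((1:ℝ)/2) := by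
          rw [show (∫ p, f p ^ (2:ℝ) ∂μ) = ∫ p, f p ^ 2 ∂μ from integral_congr_ae
            (Filter.Eventually.of_forall hfpow),
            show (∫ p, g p ^ (2:ℝ) ∂μ) = ∫ p, g p ∂μ from integral_congr_ae
            (Filter.Eventually.of_forall hgpow), hintg]
  have hf2le : ∫ p, f p ^ 2 ∂μ ≤ ∫ p, M p ^ 2 ∂μ := by
    apply integral_mono (by simpa [sq] using hf2.integrable_sq) hM2int
    intro p
    rw [hfdef]
    rcases le_or_gt (M p) 0 with h | h
    · simp [max_eq_right h, sq_nonneg]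
    · simp [max_eq_left h.le]
  have hEM2_nonneg : 0 ≤ ∫ p, M p ^ 2 ∂μ := integral_nonneg fun p => sq_nonneg _
  have hμAc : (μ Aᶜ).toReal = 1 - (μ A).toReal := by
    have hc : μ Aᶜ = 1 - μ A := by
      rw [measure_compl hAmeas (measure_ne_top μ A), measure_univ]
    rw [hc, ENNReal.toReal_sub_of_le prob_le_one ENNReal.one_ne_top, ENNReal.toReal_one]
  have hμA_le : (μ A).toReal ≤ 1 := by
    simpa using ENNReal.toReal_mono ENNReal.one_ne_top prob_le_one
  -- square both sides
  have hsq : (∫ p, M p ∂μ) ^ 2 ≤ (∫ p, M p ^ 2 ∂μ) * (1 - (μ A).toReal) := by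
    have hrhs_nonneg : 0 ≤ (∫ p, f p ^ 2 ∂μ) ^ ((1:ℝ)/2) * ((μ Aᶜ).toReal) ^ ((1:ℝ)/2) :=
      mul_nonneg (Real.rpow_nonneg (integral_nonneg fun p => sq_nonneg _) _)
        (Real.rpow_nonneg ENNReal.toReal_nonneg _)
    have := mul_self_le_mul_self hpos.le hmain
    have hfint_nonneg : 0 ≤ ∫ p, f p ^ 2 ∂μ := integral_nonneg fun p => sq_nonneg _
    calc (∫ p, M p ∂μ) ^ 2 = (∫ p, M p ∂μ) * (∫ p, M p ∂μ) := sq _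
      _ ≤ ((∫ p, f p ^ 2 ∂μ) ^ ((1:ℝ)/2) * ((μ Aᶜ).toReal) ^ ((1:ℝ)/2)) *
          ((∫ p, f p ^ 2 ∂μ) ^ ((1:ℝ)/2) * ((μ Aᶜ).toReal) ^ ((1:ℝ)/2)) := this
      _ = (∫ p, f p ^ 2 ∂μ) * (μ Aᶜ).toReal := by
          rw [mul_mul_mul_comm, ← Real.rpow_add' hfint_nonneg (by norm_num),
            ← Real.rpow_add' ENNReal.toReal_nonneg (by norm_num)]
          norm_num
      _ ≤ (∫ p, M p ^ 2 ∂μ) * (μ Aᶜ).toReal :=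
          mul_le_mul_of_nonneg_right hf2le ENNReal.toReal_nonneg
      _ = (∫ p, M p ^ 2 ∂μ) * (1 - (μ A).toReal) := by rw [hμAc]
  have hEM2_pos : 0 < ∫ p, M p ^ 2 ∂μ := by
    by_contra hc
    push_neg at hc
    have h0 : ∫ p, M p ^ 2 ∂μ = 0 := le_antisymm hc hEM2_nonneg
    have : (∫ p, M p ∂μ) ^ 2 ≤ 0 := by
      calc (∫ p, M p ∂μ) ^ 2 ≤ (∫ p, M p ^ 2 ∂μ) * (1 - (μ A).toReal) := hsq
        _ = 0 := by rw [h0]; ring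
    nlinarith [hpos]
  -- conclude
  have hdiv : (∫ p, M p ∂μ) ^ 2 / (∫ p, M p ^ 2 ∂μ) ≤ 1 - (μ A).toReal :=
    (div_le_iff₀ hEM2_pos).mpr (by linarith [hsq])
  linarith [hdiv]
end

section
/- For binary classification, the Gibbs loss decomposes as L_Gibbs(ρ) = e_ρ + ½·d_ρ, where e_ρ is the expected joint error of two independent hypotheses drawn from ρ and d_ρ is the expected disagreement. -/
open MeasureTheory Finset

/-- In binary classification, the Gibbs loss decomposes as
`L_Gibbs(ρ) = e_ρ + d_ρ/2`, where `e_ρ` is the expected joint error of two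
independent hypotheses drawn from `ρ` and `d_ρ` is the expected disagreement. -/
theorem gibbs_loss_decomposition
    (X : Type*) [MeasurableSpace X]
    (μ : Measure (X × ℝ)) [IsProbabilityMeasure μ]
    (H : Type*) [Fintype H]
    (hyp : H → X → ℝ) (hmeas : ∀ h, Measurable (hyp h))
    (hval : ∀ h x, hyp h x = 1 ∨ hyp h x = -1)
    (hlab : ∀ᵐ p ∂μ, p.2 = 1 ∨ p.2 = -1)
    (ρ : H → ℝ) (hρ0 : ∀ h, 0 ≤ ρ h) (hρ1 : ∑ h, ρ h = 1)
    (e d : ℝ)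
    (he : e = ∑ h₁, ∑ h₂, ρ h₁ * ρ h₂ *
        (μ {p | hyp h₁ p.1 ≠ p.2 ∧ hyp h₂ p.1 ≠ p.2}).toReal)
    (hd : d = ∑ h₁, ∑ h₂, ρ h₁ * ρ h₂ *
        (μ {p | hyp h₁ p.1 ≠ hyp h₂ p.1}).toReal) :
    ∑ h, ρ h * (μ {p | hyp h p.1 ≠ p.2}).toReal = e + d / 2 := by
  have hmE : ∀ h : H, MeasurableSet {p : X × ℝ | hyp h p.1 ≠ p.2} := fun h =>
    (measurableSet_eq_fun ((hmeas h).comp measurable_fst) measurable_snd).compl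
  set ℓ : H → ℝ := fun h => (μ {p | hyp h p.1 ≠ p.2}).toReal with hℓ
  have key : ∀ h₁ h₂ : H,
      (μ {p : X × ℝ | hyp h₁ p.1 ≠ p.2 ∧ hyp h₂ p.1 ≠ p.2}).toReal
        + (μ {p : X × ℝ | hyp h₁ p.1 ≠ hyp h₂ p.1}).toReal / 2
      = (ℓ h₁ + ℓ h₂) / 2 := by
    intro h₁ h₂
    set E₁ := {p : X × ℝ | hyp h₁ p.1 ≠ p.2} with hE₁
    set E₂ := {p : X × ℝ | hyp h₂ p.1 ≠ p.2} with hE₂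
    set A := {p : X × ℝ | hyp h₁ p.1 ≠ p.2 ∧ hyp h₂ p.1 ≠ p.2} with hA
    set D := {p : X × ℝ | hyp h₁ p.1 ≠ hyp h₂ p.1} with hD
    have hAE : A = E₁ ∩ E₂ := rfl
    have hmD : MeasurableSet D :=
      (measurableSet_eq_fun ((hmeas h₁).comp measurable_fst)
        ((hmeas h₂).comp measurable_fst)).compl
    have hdisj : μ (A ∩ D) = 0 := by
      refine measure_mono_null ?_ (ae_iff.mp hlab)
      rintro p ⟨⟨hp1, hp2⟩, hpD⟩
      simp only [Set.mem_setOf_eq]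
      exact fun hy => hpD (by
        rcases hval h₁ p.1 with v1 | v1 <;> rcases hval h₂ p.1 with v2 | v2 <;>
          rcases hy with hy | hy <;> simp_all)
    have hun : μ (E₁ ∪ E₂) = μ (A ∪ D) := by
      refine measure_congr ?_
      refine Filter.eventuallyEq_set.mpr (hlab.mono fun p hy => ?_)
      simp only [Set.mem_union, hAE, Set.mem_inter_iff, hE₁, hE₂, hD, Set.mem_setOf_eq]
      rcases hy with hy | hy <;>
        rcases hval h₁ p.1 with v1 | v1 <;> rcases hval h₂ p.1 with v2 | v2 <;>
        rw [hy, v1, v2] <;> norm_num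
    have hsum : μ E₁ + μ E₂ = μ A + μ A + μ D := by
      have h1 : μ (E₁ ∪ E₂) + μ (E₁ ∩ E₂) = μ E₁ + μ E₂ :=
        measure_union_add_inter E₁ (hmE h₂)
      have h2 : μ (A ∪ D) = μ A + μ D :=
        measure_union₀ hmD.nullMeasurableSet hdisj
      rw [← h1, hun, h2, ← hAE]
      ring
    have fE₁ := measure_ne_top μ E₁
    have fE₂ := measure_ne_top μ E₂
    have fA := measure_ne_top μ A
    have fD := measure_ne_top μ D
    have hr : (μ E₁).toReal + (μ E₂).toReal
        = (μ A).toReal + (μ A).toReal + (μ D).toReal := by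
      have := congrArg ENNReal.toReal hsum
      rwa [ENNReal.toReal_add fE₁ fE₂,
        ENNReal.toReal_add (ENNReal.add_ne_top.mpr ⟨fA, fA⟩) fD,
        ENNReal.toReal_add fA fA] at this
    simp only [hℓ]
    linarith
  rw [he, hd, Finset.sum_div, ← Finset.sum_add_distrib]
  rw [show (∑ h, ρ h * (μ {p | hyp h p.1 ≠ p.2}).toReal) = ∑ h, ρ h * ℓ h from rfl]
  have step : ∀ h₁ : H, (∑ h₂, ρ h₁ * ρ h₂ *
        (μ {p : X × ℝ | hyp h₁ p.1 ≠ p.2 ∧ hyp h₂ p.1 ≠ p.2}).toReal)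
      + (∑ h₂, ρ h₁ * ρ h₂ * (μ {p : X × ℝ | hyp h₁ p.1 ≠ hyp h₂ p.1}).toReal) / 2
      = ∑ h₂, ρ h₁ * ρ h₂ * ((ℓ h₁ + ℓ h₂) / 2) := by
    intro h₁
    rw [Finset.sum_div, ← Finset.sum_add_distrib]
    refine Finset.sum_congr rfl fun h₂ _ => ?_
    rw [← key h₁ h₂]
    ring
  rw [Finset.sum_congr rfl fun h₁ _ => step h₁]
  have expand : ∀ h₁ h₂ : H, ρ h₁ * ρ h₂ * ((ℓ h₁ + ℓ h₂) / 2)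
      = ρ h₁ * ℓ h₁ * ρ h₂ / 2 + ρ h₁ * (ρ h₂ * ℓ h₂) / 2 := fun _ _ => by ring
  simp only [expand, Finset.sum_add_distrib, ← Finset.sum_div, ← Finset.mul_sum,
    ← Finset.sum_mul, hρ1]
  ring
end

section
/- The expected disagreement satisfies d_ρ ≤ 2(√e_ρ − e_ρ) where e_ρ is the expected joint error, provided 2e_ρ + d_ρ < 1. -/
open MeasureTheory Finset

/-- The expected disagreement satisfies `d_ρ ≤ 2(√e_ρ - e_ρ)`, where `e_ρ` is
the expected joint error, provided `2 e_ρ + d_ρ < 1`. -/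
theorem disagreement_le_sqrt_joint_error
    (X : Type*) [MeasurableSpace X]
    (μ : Measure (X × ℝ)) [IsProbabilityMeasure μ]
    (H : Type*) [Fintype H]
    (hyp : H → X → ℝ) (hmeas : ∀ h, Measurable (hyp h))
    (hval : ∀ h x, hyp h x = 1 ∨ hyp h x = -1)
    (hlab : ∀ᵐ p ∂μ, p.2 = 1 ∨ p.2 = -1)
    (ρ : H → ℝ) (hρ0 : ∀ h, 0 ≤ ρ h) (hρ1 : ∑ h, ρ h = 1)
    (e d : ℝ)
    (he : e = ∑ h₁, ∑ h₂, ρ h₁ * ρ h₂ *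
        (μ {p | hyp h₁ p.1 ≠ p.2 ∧ hyp h₂ p.1 ≠ p.2}).toReal)
    (hd : d = ∑ h₁, ∑ h₂, ρ h₁ * ρ h₂ *
        (μ {p | hyp h₁ p.1 ≠ hyp h₂ p.1}).toReal)
    (hcond : 2 * e + d < 1) :
    d ≤ 2 * (Real.sqrt e - e) := by
  classical
  -- error set of each hypothesis
  set A : H → Set (X × ℝ) := fun h => {p | hyp h p.1 ≠ p.2} with hA
  have hmA : ∀ h, MeasurableSet (A h) := by
    intro h
    have : A h = {p : X × ℝ | hyp h p.1 = p.2}ᶜ := by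
      ext p; simp [A]
    rw [this]
    exact (measurableSet_eq_fun ((hmeas h).comp measurable_fst) measurable_snd).compl
  have hmD : ∀ h₁ h₂, MeasurableSet {p : X × ℝ | hyp h₁ p.1 ≠ hyp h₂ p.1} := by
    intro h₁ h₂
    have : {p : X × ℝ | hyp h₁ p.1 ≠ hyp h₂ p.1}
        = {p : X × ℝ | hyp h₁ p.1 = hyp h₂ p.1}ᶜ := by ext p; simp
    rw [this]
    exact (measurableSet_eq_fun ((hmeas h₁).comp measurable_fst)
      ((hmeas h₂).comp measurable_fst)).compl
  have hint : ∀ s : Set (X × ℝ), MeasurableSet s →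
      Integrable (s.indicator (1 : X × ℝ → ℝ)) μ := by
    intro s hs
    exact (integrable_indicator_iff hs).mpr (integrableOn_const (measure_ne_top μ s))
  have hsets : ∀ h₁ h₂ : H, {p : X × ℝ | hyp h₁ p.1 ≠ p.2 ∧ hyp h₂ p.1 ≠ p.2}
      = A h₁ ∩ A h₂ := by
    intro h₁ h₂; ext p; simp [A, Set.mem_inter_iff, Set.mem_setOf_eq]
  -- per-example error rate
  set W : X × ℝ → ℝ := fun p => ∑ h, ρ h * (A h).indicator 1 p with hW
  set m : H → ℝ := fun h => (μ (A h)).toReal with hm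
  set r : ℝ := ∑ h, ρ h * m h with hr
  have hWint : Integrable W μ := by
    apply integrable_finset_sum
    intro h _
    exact ((hint _ (hmA h)).const_mul _)
  have hWintegral : ∫ p, W p ∂μ = r := by
    rw [hW, integral_finset_sum _ (fun h _ => ((hint _ (hmA h)).const_mul _))]
    refine Finset.sum_congr rfl fun h _ => ?_
    rw [integral_const_mul, integral_indicator_one (hmA h), measureReal_def]
  -- W² as a double sum of indicators of intersections
  have hWsq : ∀ p, W p ^ 2 = ∑ h₁, ∑ h₂, ρ h₁ * ρ h₂ *
      ((A h₁ ∩ A h₂).indicator (1 : X × ℝ → ℝ) p) := by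
    intro p
    rw [sq, hW, Finset.sum_mul_sum]
    refine Finset.sum_congr rfl fun h₁ _ => Finset.sum_congr rfl fun h₂ _ => ?_
    rw [Set.inter_indicator_one]
    simp only [Pi.mul_apply]
    ring
  have hWsqint : Integrable (fun p => W p ^ 2) μ := by
    have : (fun p => W p ^ 2) = fun p => ∑ h₁, ∑ h₂, ρ h₁ * ρ h₂ *
        ((A h₁ ∩ A h₂).indicator (1 : X × ℝ → ℝ) p) := funext hWsq
    rw [this]
    apply integrable_finset_sum; intro h₁ _
    apply integrable_finset_sum; intro h₂ _
    exact ((hint _ ((hmA h₁).inter (hmA h₂))).const_mul _)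
  have heq : e = ∫ p, W p ^ 2 ∂μ := by
    simp only [funext hWsq]
    rw [integral_finset_sum _ (fun h₁ _ => integrable_finset_sum _
      (fun h₂ _ => ((hint _ ((hmA h₁).inter (hmA h₂))).const_mul _)))]
    rw [he]
    refine Finset.sum_congr rfl fun h₁ _ => ?_
    rw [integral_finset_sum _ (fun h₂ _ => ((hint _ ((hmA h₁).inter (hmA h₂))).const_mul _))]
    refine Finset.sum_congr rfl fun h₂ _ => ?_
    rw [integral_const_mul, integral_indicator_one ((hmA h₁).inter (hmA h₂)), measureReal_def, hsets]
  -- e - r² = variance ≥ 0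
  have hvar : r ^ 2 ≤ e := by
    have h0 : 0 ≤ ∫ p, (W p - r) ^ 2 ∂μ :=
      integral_nonneg fun p => sq_nonneg _
    have hexp : ∫ p, (W p - r) ^ 2 ∂μ = e - r ^ 2 := by
      have hconst : Integrable (fun _ : X × ℝ => r ^ 2) μ := integrable_const _
      have hf : Integrable (fun p => W p ^ 2 - 2 * r * W p) μ :=
        hWsqint.sub (hWint.const_mul _)
      have hg : Integrable (fun p => 2 * r * W p) μ := hWint.const_mul _
      have h1 : (fun p => (W p - r) ^ 2)
          = fun p => (W p ^ 2 - 2 * r * W p) + r ^ 2 := by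
        funext p; ring
      rw [h1, integral_add hf hconst, integral_sub hWsqint hg, integral_const_mul,
        hWintegral, integral_const]
      simp [← heq]
      ring
    linarith
  have hr0 : 0 ≤ r := Finset.sum_nonneg fun h _ =>
    mul_nonneg (hρ0 h) ENNReal.toReal_nonneg
  have he0 : 0 ≤ e := le_trans (sq_nonneg r) hvar
  have hrsqrt : r ≤ Real.sqrt e := (Real.le_sqrt hr0 he0).mpr hvar
  -- d = 2r - 2e
  have hdisag : ∀ h₁ h₂ : H, (μ {p : X × ℝ | hyp h₁ p.1 ≠ hyp h₂ p.1}).toReal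
      = m h₁ + m h₂ - 2 * (μ (A h₁ ∩ A h₂)).toReal := by
    intro h₁ h₂
    have hae : (fun p => ({p : X × ℝ | hyp h₁ p.1 ≠ hyp h₂ p.1}).indicator
          (1 : X × ℝ → ℝ) p)
        =ᵐ[μ] fun p => (A h₁).indicator 1 p + (A h₂).indicator 1 p
          - 2 * (A h₁ ∩ A h₂).indicator 1 p := by
      filter_upwards [hlab] with p hy
      rcases hval h₁ p.1 with ha | ha <;> rcases hval h₂ p.1 with hb | hb <;>
        rcases hy with hy | hy <;>
        simp [Set.indicator_apply, A, Set.mem_setOf_eq, ha, hb, hy] <;> norm_num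
    have := integral_congr_ae hae
    rw [integral_indicator_one (hmD h₁ h₂)] at this
    have hf : Integrable (fun p => (A h₁).indicator (1 : X × ℝ → ℝ) p
        + (A h₂).indicator 1 p) μ := (hint _ (hmA h₁)).add (hint _ (hmA h₂))
    have hg : Integrable (fun p => 2 * (A h₁ ∩ A h₂).indicator (1 : X × ℝ → ℝ) p) μ :=
      (hint _ ((hmA h₁).inter (hmA h₂))).const_mul _
    rw [← measureReal_def, this, integral_sub hf hg,
      integral_add (hint _ (hmA h₁)) (hint _ (hmA h₂)), integral_const_mul,
      integral_indicator_one (hmA h₁), integral_indicator_one (hmA h₂),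
      integral_indicator_one ((hmA h₁).inter (hmA h₂))]
    rfl
  have heInter : e = ∑ h₁, ∑ h₂, ρ h₁ * ρ h₂ * (μ (A h₁ ∩ A h₂)).toReal := by
    rw [he]; simp only [hsets]
  have hde : d = 2 * r - 2 * e := by
    rw [hd]
    have key : ∀ h₁ h₂ : H, ρ h₁ * ρ h₂ * (μ {p : X × ℝ | hyp h₁ p.1 ≠ hyp h₂ p.1}).toReal
        = ρ h₁ * ρ h₂ * m h₁ + ρ h₁ * ρ h₂ * m h₂
          - 2 * (ρ h₁ * ρ h₂ * (μ (A h₁ ∩ A h₂)).toReal) := by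
      intro h₁ h₂; rw [hdisag h₁ h₂]; ring
    simp only [key]
    rw [Finset.sum_congr rfl (fun h₁ _ => Finset.sum_sub_distrib _ _),
      Finset.sum_sub_distrib,
      Finset.sum_congr rfl (fun h₁ _ => Finset.sum_add_distrib),
      Finset.sum_add_distrib]
    simp only [← Finset.mul_sum]
    rw [← heInter]
    have h1 : ∑ h₁, ∑ h₂ : H, ρ h₁ * ρ h₂ * m h₁ = r := by
      rw [hr]
      refine Finset.sum_congr rfl fun h₁ _ => ?_
      have : ∀ h₂ : H, ρ h₁ * ρ h₂ * m h₁ = (ρ h₁ * m h₁) * ρ h₂ := fun h₂ => by ring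
      simp only [this]
      rw [← Finset.mul_sum, hρ1, mul_one]
    have h2 : ∑ h₁, ∑ h₂ : H, ρ h₁ * ρ h₂ * m h₂ = r := by
      rw [Finset.sum_comm, hr]
      refine Finset.sum_congr rfl fun h₂ _ => ?_
      have : ∀ h₁ : H, ρ h₁ * ρ h₂ * m h₂ = (ρ h₂ * m h₂) * ρ h₁ := fun h₁ => by ring
      simp only [this]
      rw [← Finset.mul_sum, hρ1, mul_one]
    rw [h1, h2]; ring
  rw [hde]
  nlinarith [hrsqrt]
end

section
/- (Refined Pinsker inequality) For 0 ≤ p ≤ q < 1, the binary KL divergence satisfies kl(p‖q) ≥ (q − p)²/(2q). -/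
/-- Binary KL divergence `kl(p‖q)` with the usual conventions at the boundary. -/
noncomputable def klBer (p q : ℝ) : ℝ :=
  p * Real.log (p / q) + (1 - p) * Real.log ((1 - p) / (1 - q))

/-- Refined Pinsker inequality: for `0 ≤ p ≤ q < 1`,
`kl(p‖q) ≥ (q - p)²/(2q)`. -/
theorem refined_pinsker (p q : ℝ) (hp : 0 ≤ p) (hpq : p ≤ q) (hq : q < 1) :
    (q - p) ^ 2 / (2 * q) ≤ klBer p q := by
  rcases eq_or_lt_of_le hpq with rfl | hpq'
  · rcases eq_or_lt_of_le hp with rfl | h0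
    · simp [klBer]
    · simp [klBer, div_self h0.ne', div_self (show (1:ℝ)-p ≠ 0 from ne_of_gt (by linarith))]
  rcases eq_or_lt_of_le hp with rfl | hp'
  · -- p = 0 case: klBer 0 q = -log(1-q) ≥ q/2
    have hq0 : 0 < q := hpq'
    have h1q : 0 < 1 - q := by linarith
    have hlog : Real.log (1 - q) ≤ (1 - q) - 1 := Real.log_le_sub_one_of_pos h1q
    have : klBer 0 q = - Real.log (1 - q) := by
      simp [klBer, one_div, Real.log_inv]
    rw [this]
    rw [div_le_iff₀ (by positivity)]
    nlinarith
  · -- main case 0 < p < q < 1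
    have hq0 : 0 < q := lt_trans hp' hpq'
    have h1q : 0 < 1 - q := by linarith
    have h1p : 0 < 1 - p := by linarith
    set g : ℝ → ℝ := fun s => p * (Real.log p - Real.log s)
      + (1 - p) * (Real.log (1 - p) - Real.log (1 - s)) - (s - p)^2 / (2*q) with hg
    have hder : ∀ x ∈ Set.Icc p q, HasDerivAt g
        (p * (0 - 1/x) + (1 - p) * (0 - (1/(1-x) * (0 - 1))) - (2*(x - p)*1) / (2*q)) x := by
      intro x hx
      have hx0 : 0 < x := lt_of_lt_of_le hp' hx.1
      have hx1 : x < 1 := lt_of_le_of_lt hx.2 hq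
      have h1x : 0 < 1 - x := by linarith
      have d1 : HasDerivAt (fun s : ℝ => Real.log s) (1/x) x := by
        simpa using Real.hasDerivAt_log hx0.ne'
      have d2 : HasDerivAt (fun s : ℝ => 1 - s) (0 - 1) x :=
        (hasDerivAt_const x (1:ℝ)).sub (hasDerivAt_id x)
      have d3 : HasDerivAt (fun s : ℝ => Real.log (1 - s)) (1/(1-x) * (0 - 1)) x := by
        have := (Real.hasDerivAt_log h1x.ne').comp x d2
        exact this.congr_deriv (by ring)
      have d4 : HasDerivAt (fun s : ℝ => (s - p)^2) (2*(x - p)*1) x := by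
        have := ((hasDerivAt_id x).sub_const p).pow 2
        exact this.congr_deriv (by norm_num)
      exact ((((hasDerivAt_const x (Real.log p)).sub d1).const_mul p).add
        (((hasDerivAt_const x (Real.log (1-p))).sub d3).const_mul (1-p))).sub
        (d4.div_const (2*q))
    have hmono : MonotoneOn g (Set.Icc p q) := by
      apply monotoneOn_of_deriv_nonneg (convex_Icc p q)
      · exact fun x hx => ((hder x hx).differentiableAt).continuousAt.continuousWithinAt
      · intro x hx
        rw [interior_Icc] at hx
        exact ((hder x (Set.mem_Icc_of_Ioo hx)).differentiableAt).differentiableWithinAt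
      · intro x hx
        rw [interior_Icc] at hx
        rw [(hder x (Set.mem_Icc_of_Ioo hx)).deriv]
        have hx0 : 0 < x := lt_trans hp' hx.1
        have hx1 : x < 1 := lt_trans hx.2 hq
        have h1x : 0 < 1 - x := by linarith
        have key : 0 ≤ (x - p) * (q - x*(1-x)) :=
          mul_nonneg (by linarith [hx.1]) (by nlinarith [sq_nonneg x, hx.2])
        have h1 : p * (0 - 1/x) + (1 - p) * (0 - (1/(1-x) * (0 - 1))) - (2*(x - p)*1) / (2*q)
            = ((x - p) * (q - x*(1-x))) / (x * (1-x) * q) := by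
          field_simp
          ring
        rw [h1]
        positivity
    have hgp : g p = 0 := by simp [hg]
    have hgq : g q = klBer p q - (q - p)^2 / (2*q) := by
      simp only [hg, klBer, Real.log_div hp'.ne' hq0.ne', Real.log_div h1p.ne' h1q.ne']
    have := hmono (Set.left_mem_Icc.mpr hpq) (Set.right_mem_Icc.mpr hpq) hpq
    rw [hgp, hgq] at this
    linarith
end

section
/- The quantity ξ(n) = Σ_{k=0}^{n} C(n,k) (k/n)^k (1 − k/n)^{n−k} satisfies √n ≤ ξ(n) ≤ 2√n for all n ≥ 1. -/
open Finset Real Stirling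

section AuxStirlingXi

lemma s_pos {m : ℕ} (hm : 1 ≤ m) : 0 < stirlingSeq m := by
  obtain ⟨p, rfl⟩ : ∃ p, m = p + 1 := ⟨m - 1, by omega⟩
  exact stirlingSeq'_pos p

lemma sqrt_pi_le_s {m : ℕ} (hm : 1 ≤ m) : Real.sqrt π ≤ stirlingSeq m := by
  obtain ⟨p, rfl⟩ : ∃ p, m = p + 1 := ⟨m - 1, by omega⟩
  have ht : Filter.Tendsto (stirlingSeq ∘ Nat.succ) Filter.atTop (nhds (Real.sqrt π)) :=
    tendsto_stirlingSeq_sqrt_pi.comp (Filter.tendsto_add_atTop_nat 1)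
  exact stirlingSeq'_antitone.le_of_tendsto ht p

lemma s_le_e_div_sqrt2 {m : ℕ} (hm : 1 ≤ m) : stirlingSeq m ≤ Real.exp 1 / Real.sqrt 2 := by
  obtain ⟨p, rfl⟩ : ∃ p, m = p + 1 := ⟨m - 1, by omega⟩
  have := stirlingSeq'_antitone (Nat.zero_le p)
  simpa [stirlingSeq_one] using this

lemma fact_eq (m : ℕ) (hm : 1 ≤ m) :
    (Nat.factorial m : ℝ)
      = stirlingSeq m * (Real.sqrt 2 * Real.sqrt m * ((m : ℝ) / Real.exp 1) ^ m) := by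
  have h2 : Real.sqrt (2 * m) = Real.sqrt 2 * Real.sqrt m := Real.sqrt_mul (by norm_num) _
  have hden : Real.sqrt (2 * m) * ((m : ℝ) / Real.exp 1) ^ m ≠ 0 := by
    have hm0 : (0:ℝ) < m := by exact_mod_cast hm
    positivity
  rw [show stirlingSeq m * (Real.sqrt 2 * Real.sqrt m * ((m : ℝ) / Real.exp 1) ^ m)
      = stirlingSeq m * (Real.sqrt (2 * m) * ((m : ℝ) / Real.exp 1) ^ m) by rw [h2]]
  rw [stirlingSeq, div_mul_cancel₀ _ hden]

lemma term_eq (n k : ℕ) (hk1 : 1 ≤ k) (hkn : k < n) :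
    (n.choose k : ℝ) * ((k : ℝ) / n) ^ k * (1 - (k : ℝ) / n) ^ (n - k)
      = stirlingSeq n / (stirlingSeq k * stirlingSeq (n - k))
        * (Real.sqrt n / (Real.sqrt 2 * Real.sqrt k * Real.sqrt ((n:ℝ) - k))) := by
  obtain ⟨j, rfl⟩ : ∃ j, n = k + j := ⟨n - k, by omega⟩
  have hj1 : 1 ≤ j := by omega
  have hsub : k + j - k = j := by omega
  rw [hsub]
  have hK : (0:ℝ) < k := by exact_mod_cast hk1
  have hJ : (0:ℝ) < j := by exact_mod_cast hj1
  have hN : (0:ℝ) < (k:ℝ) + j := by linarith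
  have hchoose : (((k+j).choose k : ℕ) : ℝ)
      = (Nat.factorial (k+j) : ℝ) / ((Nat.factorial k : ℝ) * (Nat.factorial j : ℝ)) := by
    rw [Nat.cast_choose ℝ (by omega : k ≤ k + j), hsub]
  have hsk := s_pos hk1
  have hsj := s_pos hj1
  have hskj := s_pos (show 1 ≤ k + j by omega)
  have e1 := fact_eq k hk1
  have e2 := fact_eq j hj1
  have e3 := fact_eq (k+j) (by omega)
  rw [hchoose, e1, e2, e3]
  push_cast
  rw [show ((k:ℝ) + j) - k = j by ring]
  rw [div_pow, div_pow, div_pow]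
  have h2 : Real.sqrt 2 ≠ 0 := by positivity
  have hqk : Real.sqrt k ≠ 0 := by positivity
  have hqj : Real.sqrt j ≠ 0 := by positivity
  have hqkj : Real.sqrt ((k:ℝ)+j) ≠ 0 := by positivity
  have he : Real.exp 1 ≠ 0 := by positivity
  have hone : 1 - (k:ℝ) / ((k:ℝ) + j) = (j:ℝ) / ((k:ℝ) + j) := by field_simp; ring
  rw [hone, div_pow]
  field_simp
  rw [div_pow]
  have hinv : ((k:ℝ)+j)^j * (((k:ℝ)+j)^j)⁻¹ = 1 := mul_inv_cancel₀ (by positivity)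
  linear_combination ((k:ℝ)+j)^k * Real.exp 1 ^ k * Real.exp 1 ^ j * (j:ℝ)^j * hinv


-- numeric facts
lemma sqrt2_le : Real.sqrt 2 ≤ 1.41422 := by
  rw [show (1.41422:ℝ) = Real.sqrt (1.41422^2) by rw [Real.sqrt_sq (by norm_num)]]
  exact Real.sqrt_le_sqrt (by norm_num)

lemma le_sqrt2 : (1.41421:ℝ) ≤ Real.sqrt 2 := by
  rw [show (1.41421:ℝ) = Real.sqrt (1.41421^2) by rw [Real.sqrt_sq (by norm_num)]]
  exact Real.sqrt_le_sqrt (by norm_num)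

lemma sqrt_pi_ge : (1.7724:ℝ) ≤ Real.sqrt π := by
  rw [show (1.7724:ℝ) = Real.sqrt (1.7724^2) by rw [Real.sqrt_sq (by norm_num)]]
  exact Real.sqrt_le_sqrt (by nlinarith [Real.pi_gt_d6])

lemma exp_sq_le : (Real.exp 1)^2 ≤ 7.3891 := by
  nlinarith [Real.exp_one_lt_d9, Real.exp_pos 1]

/-- ratio bound low -/
lemma ratio_lb (n k : ℕ) (hk1 : 1 ≤ k) (hkn : k < n) :
    (0.3392 : ℝ) * Real.sqrt 2 ≤ stirlingSeq n / (stirlingSeq k * stirlingSeq (n - k)) := by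
  have h1 : Real.sqrt π ≤ stirlingSeq n := sqrt_pi_le_s (by omega)
  have h2 : stirlingSeq k ≤ Real.exp 1 / Real.sqrt 2 := s_le_e_div_sqrt2 hk1
  have h3 : stirlingSeq (n-k) ≤ Real.exp 1 / Real.sqrt 2 := s_le_e_div_sqrt2 (by omega)
  have hk0 : (0:ℝ) < stirlingSeq k := s_pos hk1
  have hnk0 : (0:ℝ) < stirlingSeq (n-k) := s_pos (by omega)
  have hs2 : (0:ℝ) < Real.sqrt 2 := by positivity
  have hd : stirlingSeq k * stirlingSeq (n-k) ≤ (Real.exp 1)^2 / 2 := by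
    have : stirlingSeq k * stirlingSeq (n-k) ≤ (Real.exp 1 / Real.sqrt 2) * (Real.exp 1 / Real.sqrt 2) :=
      mul_le_mul h2 h3 hnk0.le (by positivity)
    have hss : Real.sqrt 2 * Real.sqrt 2 = 2 := Real.mul_self_sqrt (by norm_num)
    calc stirlingSeq k * stirlingSeq (n-k) ≤ _ := this
      _ = (Real.exp 1)^2 / 2 := by rw [div_mul_div_comm, hss]; ring
  have hdpos : (0:ℝ) < stirlingSeq k * stirlingSeq (n-k) := by positivity
  calc (0.3392:ℝ) * Real.sqrt 2 ≤ Real.sqrt π / ((Real.exp 1)^2/2) := by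
        rw [le_div_iff₀ (by positivity)]
        nlinarith [sqrt2_le, sqrt_pi_ge, exp_sq_le, Real.sqrt_nonneg (2:ℝ), Real.exp_pos 1,
          sq_nonneg (Real.exp 1)]
    _ ≤ stirlingSeq n / (stirlingSeq k * stirlingSeq (n-k)) :=
        div_le_div₀ (lt_of_lt_of_le (by positivity) h1).le h1 hdpos hd

lemma ratio_ub (n k : ℕ) (hk1 : 1 ≤ k) (hkn : k < n) :
    stirlingSeq n / (stirlingSeq k * stirlingSeq (n - k)) ≤ (0.433 : ℝ) * Real.sqrt 2 := by
  have h1 : stirlingSeq n ≤ Real.exp 1 / Real.sqrt 2 := s_le_e_div_sqrt2 (by omega)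
  have h2 : Real.sqrt π ≤ stirlingSeq k := sqrt_pi_le_s hk1
  have h3 : Real.sqrt π ≤ stirlingSeq (n-k) := sqrt_pi_le_s (by omega)
  have hpi : (0:ℝ) < Real.sqrt π := Real.sqrt_pos.mpr Real.pi_pos
  have hd : π ≤ stirlingSeq k * stirlingSeq (n-k) := by
    calc π = Real.sqrt π * Real.sqrt π := (Real.mul_self_sqrt Real.pi_pos.le).symm
      _ ≤ _ := mul_le_mul h2 h3 hpi.le (lt_of_lt_of_le hpi h2).le
  have hs2 : (0:ℝ) < Real.sqrt 2 := by positivity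
  calc stirlingSeq n / (stirlingSeq k * stirlingSeq (n-k))
      ≤ (Real.exp 1 / Real.sqrt 2) / π :=
        div_le_div₀ (by positivity) h1 Real.pi_pos hd
    _ ≤ (0.433:ℝ) * Real.sqrt 2 := by
        rw [div_div, div_le_iff₀ (by positivity)]
        have hss : Real.sqrt 2 * Real.sqrt 2 = 2 := Real.mul_self_sqrt (by norm_num)
        nlinarith [Real.exp_one_lt_d9, Real.pi_gt_d6, le_sqrt2, hss, hs2]

/-- term bounds -/
lemma term_lb (n k : ℕ) (hk1 : 1 ≤ k) (hkn : k < n) :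
    (0.3392 : ℝ) * (Real.sqrt n / (Real.sqrt k * Real.sqrt ((n:ℝ) - k)))
      ≤ (n.choose k : ℝ) * ((k : ℝ) / n) ^ k * (1 - (k : ℝ) / n) ^ (n - k) := by
  rw [term_eq n k hk1 hkn]
  have hK : (0:ℝ) < k := by exact_mod_cast hk1
  have hNK : (0:ℝ) < (n:ℝ) - k := by
    have : (k:ℝ) < n := by exact_mod_cast hkn
    linarith
  have hN : (0:ℝ) < n := by exact_mod_cast (show 0 < n by omega)
  have hG : (0:ℝ) ≤ Real.sqrt n / (Real.sqrt 2 * Real.sqrt k * Real.sqrt ((n:ℝ) - k)) := by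
    positivity
  have key := mul_le_mul_of_nonneg_right (ratio_lb n k hk1 hkn) hG
  calc (0.3392:ℝ) * (Real.sqrt n / (Real.sqrt k * Real.sqrt ((n:ℝ) - k)))
      = (0.3392:ℝ) * Real.sqrt 2 * (Real.sqrt n / (Real.sqrt 2 * Real.sqrt k * Real.sqrt ((n:ℝ) - k))) := by
        have h2 : Real.sqrt 2 ≠ 0 := by positivity
        have hk' : Real.sqrt k ≠ 0 := by positivity
        have hnk' : Real.sqrt ((n:ℝ)-k) ≠ 0 := by positivity
        field_simp
    _ ≤ _ := key

lemma term_ub (n k : ℕ) (hk1 : 1 ≤ k) (hkn : k < n) :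
    (n.choose k : ℝ) * ((k : ℝ) / n) ^ k * (1 - (k : ℝ) / n) ^ (n - k)
      ≤ (0.433 : ℝ) * (Real.sqrt n / (Real.sqrt k * Real.sqrt ((n:ℝ) - k))) := by
  rw [term_eq n k hk1 hkn]
  have hK : (0:ℝ) < k := by exact_mod_cast hk1
  have hNK : (0:ℝ) < (n:ℝ) - k := by
    have : (k:ℝ) < n := by exact_mod_cast hkn
    linarith
  have hN : (0:ℝ) < n := by exact_mod_cast (show 0 < n by omega)
  have hG : (0:ℝ) ≤ Real.sqrt n / (Real.sqrt 2 * Real.sqrt k * Real.sqrt ((n:ℝ) - k)) := by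
    positivity
  have key := mul_le_mul_of_nonneg_right (ratio_ub n k hk1 hkn) hG
  calc stirlingSeq n / (stirlingSeq k * stirlingSeq (n - k))
        * (Real.sqrt n / (Real.sqrt 2 * Real.sqrt k * Real.sqrt ((n:ℝ) - k))) ≤ _ := key
    _ = (0.433:ℝ) * (Real.sqrt n / (Real.sqrt k * Real.sqrt ((n:ℝ) - k))) := by
        have h2 : Real.sqrt 2 ≠ 0 := by positivity
        have hk' : Real.sqrt k ≠ 0 := by positivity
        have hnk' : Real.sqrt ((n:ℝ)-k) ≠ 0 := by positivity
        field_simp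

lemma cast_fix (m : ℕ) : ((m:ℝ)+1+1) = (m:ℝ)+2 := by ring

-- telescoping sums over Ico 1 (m+1)
lemma sum_rsqrt_lb (m : ℕ) :
    2 * Real.sqrt (m+1) - 2 ≤ ∑ k ∈ Ico 1 (m+1), 1 / Real.sqrt k := by
  induction m with
  | zero => simp
  | succ m ih =>
    rw [Finset.sum_Ico_succ_top (by omega)]
    push_cast
    rw [cast_fix]
    have ha : Real.sqrt ((m:ℝ)+1) ^ 2 = (m:ℝ)+1 := Real.sq_sqrt (by positivity)
    have hb : Real.sqrt ((m:ℝ)+2) ^ 2 = (m:ℝ)+2 := Real.sq_sqrt (by positivity)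
    have hap : (0:ℝ) < Real.sqrt ((m:ℝ)+1) := Real.sqrt_pos.mpr (by positivity)
    have hbp : (0:ℝ) ≤ Real.sqrt ((m:ℝ)+2) := Real.sqrt_nonneg _
    have step : 2 * Real.sqrt ((m:ℝ)+2) - 2 * Real.sqrt ((m:ℝ)+1) ≤ 1 / Real.sqrt ((m:ℝ)+1) := by
      rw [le_div_iff₀ hap]
      nlinarith [sq_nonneg (Real.sqrt ((m:ℝ)+2) - Real.sqrt ((m:ℝ)+1))]
    linarith [ih]

lemma sum_rsqrt_ub (m : ℕ) (hm : 1 ≤ m) :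
    ∑ k ∈ Ico 1 (m+1), 1 / Real.sqrt k ≤ 2 * Real.sqrt m - 1 := by
  induction m with
  | zero => omega
  | succ m ih =>
    rcases Nat.eq_zero_or_pos m with rfl | hm'
    · norm_num
    · rw [Finset.sum_Ico_succ_top (by omega)]
      push_cast
      have ha : Real.sqrt ((m:ℝ)+1) ^ 2 = (m:ℝ)+1 := Real.sq_sqrt (by positivity)
      have hb : Real.sqrt (m:ℝ) ^ 2 = (m:ℝ) := Real.sq_sqrt (by positivity)
      have hap : (0:ℝ) < Real.sqrt ((m:ℝ)+1) := Real.sqrt_pos.mpr (by positivity)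
      have hbp : (0:ℝ) ≤ Real.sqrt (m:ℝ) := Real.sqrt_nonneg _
      have step : 1 / Real.sqrt ((m:ℝ)+1) ≤ 2 * Real.sqrt ((m:ℝ)+1) - 2 * Real.sqrt (m:ℝ) := by
        rw [div_le_iff₀ hap]
        nlinarith [sq_nonneg (Real.sqrt ((m:ℝ)+1) - Real.sqrt (m:ℝ))]
      have ih' := ih hm'
      push_cast at ih'
      linarith [ih']

lemma sum_sqrt_lb (m : ℕ) :
    2/3 * (m * Real.sqrt m) ≤ ∑ k ∈ Ico 1 (m+1), Real.sqrt k := by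
  induction m with
  | zero => simp [Real.sqrt_zero]
  | succ m ih =>
    rw [Finset.sum_Ico_succ_top (by omega)]
    push_cast
    have ha : Real.sqrt (m:ℝ) ^ 2 = (m:ℝ) := Real.sq_sqrt (by positivity)
    have hb : Real.sqrt ((m:ℝ)+1) ^ 2 = (m:ℝ)+1 := Real.sq_sqrt (by positivity)
    have hap : (0:ℝ) ≤ Real.sqrt (m:ℝ) := Real.sqrt_nonneg _
    have hbp : (0:ℝ) ≤ Real.sqrt ((m:ℝ)+1) := Real.sqrt_nonneg _
    have step : 2/3 * (((m:ℝ)+1) * Real.sqrt ((m:ℝ)+1)) - 2/3 * ((m:ℝ) * Real.sqrt (m:ℝ))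
        ≤ Real.sqrt ((m:ℝ)+1) := by
      nlinarith [mul_nonneg (sq_nonneg (Real.sqrt ((m:ℝ)+1) - Real.sqrt (m:ℝ)))
        (by positivity : (0:ℝ) ≤ Real.sqrt ((m:ℝ)+1) + 2 * Real.sqrt (m:ℝ))]
    linarith [ih]

lemma sum_sqrt_ub (m : ℕ) :
    ∑ k ∈ Ico 1 (m+1), Real.sqrt k ≤ 2/3 * (((m:ℝ)+1) * Real.sqrt ((m:ℝ)+1)) := by
  induction m with
  | zero => simp; norm_num
  | succ m ih =>
    rw [Finset.sum_Ico_succ_top (by omega)]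
    push_cast
    rw [cast_fix]
    have ha : Real.sqrt ((m:ℝ)+1) ^ 2 = (m:ℝ)+1 := Real.sq_sqrt (by positivity)
    have hb : Real.sqrt ((m:ℝ)+2) ^ 2 = (m:ℝ)+2 := Real.sq_sqrt (by positivity)
    have hap : (0:ℝ) ≤ Real.sqrt ((m:ℝ)+1) := Real.sqrt_nonneg _
    have hbp : (0:ℝ) ≤ Real.sqrt ((m:ℝ)+2) := Real.sqrt_nonneg _
    have step : Real.sqrt ((m:ℝ)+1) + 2/3 * (((m:ℝ)+1) * Real.sqrt ((m:ℝ)+1))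
        ≤ 2/3 * (((m:ℝ)+2) * Real.sqrt ((m:ℝ)+2)) := by
      nlinarith [mul_nonneg (sq_nonneg (Real.sqrt ((m:ℝ)+2) - Real.sqrt ((m:ℝ)+1)))
        (by positivity : (0:ℝ) ≤ 2 * Real.sqrt ((m:ℝ)+2) + Real.sqrt ((m:ℝ)+1))]
    linarith [ih]

-- per-k bounds on g
lemma g_lb (n k : ℕ) (hk1 : 1 ≤ k) (hkn : k < n) :
    1 / Real.sqrt k + Real.sqrt k / (2*(n:ℝ))
      ≤ Real.sqrt n / (Real.sqrt k * Real.sqrt ((n:ℝ) - k)) := by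
  have hK : (0:ℝ) < k := by exact_mod_cast hk1
  have hN : (0:ℝ) < n := by exact_mod_cast (show 0 < n by omega)
  have hKN : (k:ℝ) < n := by exact_mod_cast hkn
  have hNK : (0:ℝ) < (n:ℝ) - k := by linarith
  have hqk : (0:ℝ) < Real.sqrt k := Real.sqrt_pos.mpr hK
  have hqa : (0:ℝ) < Real.sqrt ((n:ℝ) - k) := Real.sqrt_pos.mpr hNK
  have hqn : (0:ℝ) ≤ Real.sqrt n := Real.sqrt_nonneg _
  have ha : Real.sqrt ((n:ℝ)-k) ^ 2 = (n:ℝ) - k := Real.sq_sqrt hNK.le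
  have hb : Real.sqrt (n:ℝ) ^ 2 = (n:ℝ) := Real.sq_sqrt hN.le
  have hkk : Real.sqrt k * Real.sqrt k = (k:ℝ) := Real.mul_self_sqrt hK.le
  have h1 : (2*(n:ℝ) + k) * Real.sqrt ((n:ℝ)-k) ≤ 2*(n:ℝ) * Real.sqrt n := by
    apply le_of_pow_le_pow_left₀ two_ne_zero (by positivity)
    rw [mul_pow, mul_pow, ha, hb]
    nlinarith [mul_pos hN (mul_pos hK hK), mul_pos hK (mul_pos hK hK)]
  rw [div_add_div _ _ (ne_of_gt hqk) (by positivity), div_le_div_iff₀ (by positivity) (by positivity)]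
  rw [hkk]
  nlinarith [mul_le_mul_of_nonneg_right h1 hqk.le, hqk, hqa]

lemma g_ub (n k : ℕ) (hk1 : 1 ≤ k) (h2k : 2*k ≤ n) :
    Real.sqrt n / (Real.sqrt k * Real.sqrt ((n:ℝ) - k))
      ≤ 1 / Real.sqrt k + Real.sqrt k / (n:ℝ) := by
  have hkn : k < n := by omega
  have hK : (0:ℝ) < k := by exact_mod_cast hk1
  have hN : (0:ℝ) < n := by exact_mod_cast (show 0 < n by omega)
  have hKN2 : 2*(k:ℝ) ≤ n := by exact_mod_cast h2k
  have hNK : (0:ℝ) < (n:ℝ) - k := by linarith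
  have hqk : (0:ℝ) < Real.sqrt k := Real.sqrt_pos.mpr hK
  have hqa : (0:ℝ) < Real.sqrt ((n:ℝ) - k) := Real.sqrt_pos.mpr hNK
  have ha : Real.sqrt ((n:ℝ)-k) ^ 2 = (n:ℝ) - k := Real.sq_sqrt hNK.le
  have hb : Real.sqrt (n:ℝ) ^ 2 = (n:ℝ) := Real.sq_sqrt hN.le
  have hkk : Real.sqrt k * Real.sqrt k = (k:ℝ) := Real.mul_self_sqrt hK.le
  have h1 : (n:ℝ) * Real.sqrt n ≤ ((n:ℝ) + k) * Real.sqrt ((n:ℝ)-k) := by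
    apply le_of_pow_le_pow_left₀ two_ne_zero (by positivity)
    rw [mul_pow, mul_pow, ha, hb]
    have h2k' : (0:ℝ) ≤ (n:ℝ) - 2*k := by linarith
    nlinarith [mul_nonneg (mul_nonneg hK.le hK.le) h2k', mul_nonneg (mul_nonneg hK.le hN.le) h2k',
      mul_pos (mul_pos hK hK) hK]
  rw [div_add_div _ _ (ne_of_gt hqk) (ne_of_gt hN), div_le_div_iff₀ (by positivity) (by positivity)]
  rw [hkk]
  nlinarith [mul_le_mul_of_nonneg_right h1 hqk.le, hqk, hqa, Real.sqrt_nonneg (n:ℝ)]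


/-- `ξ(n) = Σ_{k=0}^n C(n,k) (k/n)^k (1-k/n)^(n-k)` (with the convention `0⁰ = 1`). -/
noncomputable def xi (n : ℕ) : ℝ :=
  ∑ k ∈ Finset.range (n + 1),
    (n.choose k : ℝ) * ((k : ℝ) / n) ^ k * (1 - (k : ℝ) / n) ^ (n - k)

noncomputable def tm (n k : ℕ) : ℝ :=
  (n.choose k : ℝ) * ((k : ℝ) / n) ^ k * (1 - (k : ℝ) / n) ^ (n - k)

noncomputable def gg (n k : ℕ) : ℝ :=
  Real.sqrt n / (Real.sqrt k * Real.sqrt ((n:ℝ) - k))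

lemma gg_nonneg (n k : ℕ) : 0 ≤ gg n k := by
  unfold gg
  positivity

lemma xi_eq (n : ℕ) (hn : 1 ≤ n) : xi n = 2 + ∑ k ∈ Ico 1 n, tm n k := by
  have hn0 : ((n:ℝ)) ≠ 0 := by exact_mod_cast (by omega : n ≠ 0)
  unfold xi tm
  rw [Finset.sum_range_succ, Finset.range_eq_Ico,
    Finset.sum_eq_sum_Ico_succ_bot (by omega : 0 < n)]
  have h0 : (n.choose 0 : ℝ) * ((0:ℕ) / (n:ℝ)) ^ 0 * (1 - ((0:ℕ):ℝ) / n) ^ (n - 0) = 1 := by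
    simp
  have hn' : (n.choose n : ℝ) * ((n:ℝ) / n) ^ n * (1 - (n:ℝ) / n) ^ (n - n) = 1 := by
    simp [Nat.choose_self, div_self hn0]
  push_cast at h0 hn' ⊢
  rw [h0, hn']
  ring

lemma sum_reflect (n : ℕ) (hn : 1 ≤ n) :
    ∑ k ∈ Ico (n/2 + 1) n, gg n k = ∑ k ∈ Ico 1 (n - n/2), gg n k := by
  apply Finset.sum_nbij' (fun k => n - k) (fun j => n - j)
  · intro a ha
    rw [Finset.mem_Ico] at *
    omega
  · intro a ha
    rw [Finset.mem_Ico] at *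
    omega
  · intro a ha
    rw [Finset.mem_Ico] at ha
    omega
  · intro a ha
    rw [Finset.mem_Ico] at ha
    omega
  · intro a ha
    rw [Finset.mem_Ico] at ha
    unfold gg
    have h1 : ((n - (n - a) : ℕ) : ℝ) = (a:ℝ) := by
      have : n - (n - a) = a := by omega
      rw [this]
    have h2 : (((n - a) : ℕ) : ℝ) = (n:ℝ) - a := by
      push_cast [Nat.cast_sub (by omega : a ≤ n)]
      ring
    rw [h2]
    have h3 : (n:ℝ) - ((n:ℝ) - a) = (a:ℝ) := by ring
    rw [h3, mul_comm]

lemma sum_g_split (n : ℕ) (hn : 1 ≤ n) :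
    ∑ k ∈ Ico 1 n, gg n k
      = ∑ k ∈ Ico 1 (n/2 + 1), gg n k + ∑ k ∈ Ico 1 (n - n/2), gg n k := by
  rw [← sum_reflect n hn, Finset.sum_Ico_consecutive _ (by omega : 1 ≤ n/2+1) (by omega : n/2+1 ≤ n)]

-- helpers to compare sqrt with multiples
lemma sqrt_le_mul_sqrt {x y c : ℝ} (hc : 0 ≤ c) (h : x ≤ c^2 * y) : Real.sqrt x ≤ c * Real.sqrt y := by
  calc Real.sqrt x ≤ Real.sqrt (c^2*y) := Real.sqrt_le_sqrt h
    _ = c * Real.sqrt y := by rw [Real.sqrt_mul (sq_nonneg c), Real.sqrt_sq hc]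

lemma mul_sqrt_le_sqrt {x y c : ℝ} (hc : 0 ≤ c) (h : c^2 * y ≤ x) : c * Real.sqrt y ≤ Real.sqrt x := by
  rw [← Real.sqrt_sq hc, ← Real.sqrt_mul (sq_nonneg c)]
  exact Real.sqrt_le_sqrt h

theorem xi_lower (n : ℕ) (hn : 1 ≤ n) : Real.sqrt n ≤ xi n := by
  have hN : (0:ℝ) < n := by exact_mod_cast (show 0 < n by omega)
  set s : ℝ := Real.sqrt n with hs
  have hs0 : 0 ≤ s := Real.sqrt_nonneg _
  -- sum of terms ≥ 0.3392 * sum of gg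
  have h1 : (0.3392:ℝ) * ∑ k ∈ Ico 1 n, gg n k ≤ ∑ k ∈ Ico 1 n, tm n k := by
    rw [Finset.mul_sum]
    apply Finset.sum_le_sum
    intro k hk
    rw [Finset.mem_Ico] at hk
    exact term_lb n k hk.1 hk.2
  -- split
  have h2 : ∑ k ∈ Ico 1 (n - n/2), gg n k ≤ ∑ k ∈ Ico 1 (n/2+1), gg n k :=
    Finset.sum_le_sum_of_subset_of_nonneg
      (Finset.Ico_subset_Ico le_rfl (by omega)) (fun i _ _ => gg_nonneg n i)
  have h3 : 2 * ∑ k ∈ Ico 1 (n - n/2), gg n k ≤ ∑ k ∈ Ico 1 n, gg n k := by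
    rw [sum_g_split n hn]
    linarith
  -- lower bound the small half sum
  set m' : ℕ := n - n/2 - 1 with hm'
  have hmeq : n - n/2 = m' + 1 := by omega
  have h4 : ∑ k ∈ Ico 1 (m'+1), (1 / Real.sqrt k + Real.sqrt k / (2*(n:ℝ)))
      ≤ ∑ k ∈ Ico 1 (n - n/2), gg n k := by
    rw [hmeq]
    apply Finset.sum_le_sum
    intro k hk
    rw [Finset.mem_Ico] at hk
    exact g_lb n k hk.1 (by omega)
  rw [Finset.sum_add_distrib] at h4
  have h5 := sum_rsqrt_lb m'
  have h6 : (2/3) * ((m':ℝ) * Real.sqrt m') / (2*(n:ℝ)) ≤ ∑ k ∈ Ico 1 (m'+1), Real.sqrt k / (2*(n:ℝ)) := by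
    rw [← Finset.sum_div]
    apply div_le_div_of_nonneg_right (sum_sqrt_lb m') (by positivity)
  -- q = sqrt(m'+1) ≥ 0.7071 s
  have hq : (0.7071:ℝ) * s ≤ Real.sqrt ((m':ℝ)+1) := by
    apply mul_sqrt_le_sqrt (by norm_num)
    have : (n:ℝ) / 2 ≤ (m':ℝ) + 1 := by
      have : n ≤ 2 * (m' + 1) := by omega
      have := (Nat.cast_le (α := ℝ)).mpr this
      push_cast at this
      linarith
    nlinarith [hN]
  have hsum1 : 2 * Real.sqrt ((m':ℝ)+1) - 2 ≤ ∑ k ∈ Ico 1 (m'+1), 1 / Real.sqrt k := h5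
  have hxi := xi_eq n hn
  rcases le_or_gt n 250 with hsmall | hbig
  · -- n ≤ 250
    have hsub : s ≤ 15.82 := by
      rw [hs, show (15.82:ℝ) = Real.sqrt (15.82^2) by rw [Real.sqrt_sq (by norm_num)]]
      apply Real.sqrt_le_sqrt
      have : (n:ℝ) ≤ 250 := by exact_mod_cast hsmall
      nlinarith
    have hB : 2 * (0.7071 * s) - 2 ≤ ∑ k ∈ Ico 1 (n - n/2), gg n k := by
      have hpos : 0 ≤ ∑ k ∈ Ico 1 (m'+1), Real.sqrt k / (2*(n:ℝ)) := by
        apply Finset.sum_nonneg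
        intro i _
        positivity
      linarith [hsum1, hq, h4, hpos]
    linarith [h1, h3, hB, hxi, hs0, hsub]
  · -- n ≥ 251
    have hm'big : (0.49601:ℝ) * n ≤ (m':ℝ) := by
      have : 124003 * n ≤ 250000 * m' := by omega
      have := (Nat.cast_le (α := ℝ)).mpr this
      push_cast at this
      linarith
    have hr : (0.70427:ℝ) * s ≤ Real.sqrt m' := by
      apply mul_sqrt_le_sqrt (by norm_num)
      nlinarith [hm'big, hN]
    have hmr : (0.49601:ℝ) * n * (0.70427 * s) ≤ (m':ℝ) * Real.sqrt m' :=
      mul_le_mul hm'big hr (by positivity) (by positivity)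
    have hP : (0.11644:ℝ) * s ≤ (2/3) * ((m':ℝ) * Real.sqrt m') / (2*(n:ℝ)) := by
      rw [le_div_iff₀ (by positivity)]
      nlinarith [hmr, mul_nonneg hN.le hs0]
    have hB : 2 * (0.7071 * s) - 2 + 0.11644 * s ≤ ∑ k ∈ Ico 1 (n - n/2), gg n k := by
      linarith [hsum1, hq, h4, h6, hP]
    linarith [h1, h3, hB, hxi, hs0]

theorem xi_upper (n : ℕ) (hn : 1 ≤ n) : xi n ≤ 2 * Real.sqrt n := by
  rcases le_or_gt n 7 with hsmall | hbig
  · -- explicit small cases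
    interval_cases n
    · simp [xi, Finset.sum_range_succ]
      norm_num [Nat.choose]
    · have h : Real.sqrt 2 ^ 2 = 2 := Real.sq_sqrt (by norm_num)
      have h0 : (0:ℝ) ≤ Real.sqrt 2 := Real.sqrt_nonneg _
      simp [xi, Finset.sum_range_succ]
      norm_num [Nat.choose]
      nlinarith [h, h0]
    · have h : Real.sqrt 3 ^ 2 = 3 := Real.sq_sqrt (by norm_num)
      have h0 : (0:ℝ) ≤ Real.sqrt 3 := Real.sqrt_nonneg _
      simp [xi, Finset.sum_range_succ]
      norm_num [Nat.choose]
      nlinarith [h, h0]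
    · have h : Real.sqrt 4 ^ 2 = 4 := Real.sq_sqrt (by norm_num)
      have h0 : (0:ℝ) ≤ Real.sqrt 4 := Real.sqrt_nonneg _
      simp [xi, Finset.sum_range_succ]
      norm_num [Nat.choose]
    · have h : Real.sqrt 5 ^ 2 = 5 := Real.sq_sqrt (by norm_num)
      have h0 : (0:ℝ) ≤ Real.sqrt 5 := Real.sqrt_nonneg _
      simp [xi, Finset.sum_range_succ]
      norm_num [Nat.choose]
      nlinarith [h, h0]
    · have h : Real.sqrt 6 ^ 2 = 6 := Real.sq_sqrt (by norm_num)
      have h0 : (0:ℝ) ≤ Real.sqrt 6 := Real.sqrt_nonneg _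
      simp [xi, Finset.sum_range_succ]
      norm_num [Nat.choose]
      nlinarith [h, h0]
    · have h : Real.sqrt 7 ^ 2 = 7 := Real.sq_sqrt (by norm_num)
      have h0 : (0:ℝ) ≤ Real.sqrt 7 := Real.sqrt_nonneg _
      simp [xi, Finset.sum_range_succ]
      norm_num [Nat.choose]
      nlinarith [h, h0]
  · -- n ≥ 8
    have hN : (0:ℝ) < n := by exact_mod_cast (show 0 < n by omega)
    set s : ℝ := Real.sqrt n with hs
    have hs0 : 0 ≤ s := Real.sqrt_nonneg _
    set m : ℕ := n / 2 with hm
    have hm1 : 1 ≤ m := by omega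
    have h1 : ∑ k ∈ Ico 1 n, tm n k ≤ 0.433 * ∑ k ∈ Ico 1 n, gg n k := by
      rw [Finset.mul_sum]
      apply Finset.sum_le_sum
      intro k hk
      rw [Finset.mem_Ico] at hk
      exact term_ub n k hk.1 hk.2
    have h2 : ∑ k ∈ Ico 1 (n - n/2), gg n k ≤ ∑ k ∈ Ico 1 (m+1), gg n k :=
      Finset.sum_le_sum_of_subset_of_nonneg
        (Finset.Ico_subset_Ico le_rfl (by omega)) (fun i _ _ => gg_nonneg n i)
    have h3 : ∑ k ∈ Ico 1 n, gg n k ≤ 2 * ∑ k ∈ Ico 1 (m+1), gg n k := by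
      rw [sum_g_split n (by omega)]
      linarith
    have h4 : ∑ k ∈ Ico 1 (m+1), gg n k
        ≤ ∑ k ∈ Ico 1 (m+1), (1 / Real.sqrt k + Real.sqrt k / (n:ℝ)) := by
      apply Finset.sum_le_sum
      intro k hk
      rw [Finset.mem_Ico] at hk
      exact g_ub n k hk.1 (by omega)
    rw [Finset.sum_add_distrib] at h4
    have h5 := sum_rsqrt_ub m hm1
    have h6 : ∑ k ∈ Ico 1 (m+1), Real.sqrt k / (n:ℝ)
        ≤ 2/3 * (((m:ℝ)+1) * Real.sqrt ((m:ℝ)+1)) / (n:ℝ) := by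
      rw [← Finset.sum_div]
      apply div_le_div_of_nonneg_right (sum_sqrt_ub m) hN.le
    -- sqrt m ≤ 0.70711 s
    have hq : Real.sqrt m ≤ 0.70711 * s := by
      apply sqrt_le_mul_sqrt (by norm_num)
      have : 2 * (m:ℝ) ≤ n := by exact_mod_cast (show 2*m ≤ n by omega)
      nlinarith
    have hq2 : Real.sqrt ((m:ℝ)+1) ≤ 0.79057 * s := by
      apply sqrt_le_mul_sqrt (by norm_num)
      have : 8 * ((m:ℝ)+1) ≤ 5 * n := by exact_mod_cast (show 8*(m+1) ≤ 5*n by omega)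
      nlinarith
    have hmn : ((m:ℝ)+1) ≤ 0.625 * n := by
      have : 8 * ((m:ℝ)+1) ≤ 5 * n := by exact_mod_cast (show 8*(m+1) ≤ 5*n by omega)
      linarith
    have hP : 2/3 * (((m:ℝ)+1) * Real.sqrt ((m:ℝ)+1)) / (n:ℝ) ≤ 0.32941 * s := by
      rw [div_le_iff₀ hN]
      have key : ((m:ℝ)+1) * Real.sqrt ((m:ℝ)+1) ≤ (0.625 * n) * (0.79057 * s) :=
        mul_le_mul hmn hq2 (Real.sqrt_nonneg _) (by positivity)
      nlinarith [key, mul_nonneg hN.le hs0]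
    have hslb : (2.8284:ℝ) ≤ s := by
      rw [hs]
      rw [show (2.8284:ℝ) = Real.sqrt (2.8284^2) by rw [Real.sqrt_sq (by norm_num)]]
      apply Real.sqrt_le_sqrt
      have : (8:ℝ) ≤ n := by exact_mod_cast hbig
      nlinarith
    have hxi := xi_eq n (by omega)
    linarith [h1, h3, h4, h5, h6, hq, hq2, hP, hxi, hslb]

end AuxStirlingXi

/-- `√n ≤ ξ(n) ≤ 2√n` for all `n ≥ 1`. -/
theorem xi_bounds (n : ℕ) (hn : 1 ≤ n) :
    Real.sqrt n ≤ xi n ∧ xi n ≤ 2 * Real.sqrt n :=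
  ⟨xi_lower n hn, xi_upper n hn⟩
end

section
/- (Chernoff bound for the empirical mean via kl) For i.i.d. {0,1}-valued (more generally [0,1]-valued) random variables Z₁,…,Z_n with mean p and empirical mean p̂, for any δ ∈ (0,1), with probability at least 1−δ: kl(p̂ ‖ p) ≤ ln(2√n/δ)/n. -/
open MeasureTheory Finset

lemma markov_exp
    (Ω : Type*) [MeasurableSpace Ω]
    (ν : Measure Ω) [IsProbabilityMeasure ν]
    (f : Ω → ℝ) (hm : Measurable f) (hb : ∀ ω, f ω ∈ Set.Icc (0 : ℝ) 1)
    (n : ℕ) (t s : ℝ) (ht : 0 ≤ t) :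
    (Measure.pi fun _ : Fin n => ν) {ω | s ≤ ∑ i, f (ω i)} ≤
      ENNReal.ofReal (Real.exp (-(t * s)) * (∫ x, Real.exp (t * f x) ∂ν) ^ n) := by
  letI : MeasureSpace Ω := ⟨ν⟩
  have hvol : (volume : Measure Ω) = ν := rfl
  set μ := (Measure.pi fun _ : Fin n => ν) with hμ
  haveI : IsProbabilityMeasure μ := by
    rw [hμ]; infer_instance
  -- integrability of each factor
  have hint : Integrable (fun x => Real.exp (t * f x)) ν := by
    refine Integrable.mono' (integrable_const (Real.exp t)) ?_ ?_
    · exact (Real.measurable_exp.comp (hm.const_mul t)).aestronglyMeasurable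
    · refine Filter.Eventually.of_forall fun x => ?_
      rw [Real.norm_eq_abs, abs_of_pos (Real.exp_pos _)]
      exact Real.exp_le_exp.2 (by nlinarith [(hb x).1, (hb x).2])
  -- the product function and its integral
  have hprod : ∫ ω, ∏ i : Fin n, Real.exp (t * f (ω i)) ∂μ
      = (∫ x, Real.exp (t * f x) ∂ν) ^ n := by
    have := MeasureTheory.integral_fintype_prod_eq_pow (𝕜 := ℝ) (E := Ω) (ι := Fin n) (μ := ν)
      (fun x => Real.exp (t * f x))
    simpa [hvol, volume_pi, Fintype.card_fin] using this
  have hprodint : Integrable (fun ω : Fin n → Ω => ∏ i, Real.exp (t * f (ω i))) μ := by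
    have := MeasureTheory.Integrable.fintype_prod (ι := Fin n) (E := Ω)
      (f := fun _ x => Real.exp (t * f x)) (fun _ => hint)
    simpa [hvol, volume_pi] using this
  -- Markov
  have hmarkov := mul_meas_ge_le_integral_of_nonneg
    (μ := μ) (f := fun ω : Fin n → Ω => ∏ i, Real.exp (t * f (ω i)))
    (Filter.Eventually.of_forall fun ω => Finset.prod_nonneg fun i _ => (Real.exp_pos _).le)
    hprodint (Real.exp (t * s))
  have hsub : {ω : Fin n → Ω | s ≤ ∑ i, f (ω i)} ⊆
      {ω | Real.exp (t * s) ≤ ∏ i, Real.exp (t * f (ω i))} := by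
    intro ω hω
    simp only [Set.mem_setOf_eq] at *
    rw [← Real.exp_sum]
    apply Real.exp_le_exp.2
    rw [← Finset.mul_sum]
    exact mul_le_mul_of_nonneg_left hω ht
  have hfin : μ {ω | Real.exp (t * s) ≤ ∏ i, Real.exp (t * f (ω i))} ≠ ⊤ :=
    (measure_lt_top μ _).ne
  calc μ {ω | s ≤ ∑ i, f (ω i)}
      ≤ μ {ω | Real.exp (t * s) ≤ ∏ i, Real.exp (t * f (ω i))} := measure_mono hsub
    _ = ENNReal.ofReal (μ {ω | Real.exp (t * s) ≤ ∏ i, Real.exp (t * f (ω i))}).toReal := by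
        rw [ENNReal.ofReal_toReal hfin]
    _ ≤ ENNReal.ofReal (Real.exp (-(t * s)) * (∫ x, Real.exp (t * f x) ∂ν) ^ n) := by
        apply ENNReal.ofReal_le_ofReal
        rw [hprod, measureReal_def] at hmarkov
        have he := Real.exp_pos (t * s)
        rw [Real.exp_neg, inv_mul_eq_div, le_div_iff₀ he]
        nlinarith [hmarkov]


lemma mgf_bound
    (Ω : Type*) [MeasurableSpace Ω]
    (ν : Measure Ω) [IsProbabilityMeasure ν]
    (f : Ω → ℝ) (hm : Measurable f) (hb : ∀ ω, f ω ∈ Set.Icc (0 : ℝ) 1)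
    (t : ℝ) :
    ∫ x, Real.exp (t * f x) ∂ν ≤ 1 - (∫ x, f x ∂ν) + (∫ x, f x ∂ν) * Real.exp t := by
  have hintf : Integrable f ν := by
    refine Integrable.mono' (integrable_const (1 : ℝ)) hm.aestronglyMeasurable ?_
    exact Filter.Eventually.of_forall fun x => by
      rw [Real.norm_eq_abs, abs_of_nonneg (hb x).1]; exact (hb x).2
  have hint : Integrable (fun x => Real.exp (t * f x)) ν := by
    refine Integrable.mono' (integrable_const (Real.exp |t|)) ?_ ?_
    · exact (Real.measurable_exp.comp (hm.const_mul t)).aestronglyMeasurable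
    · refine Filter.Eventually.of_forall fun x => ?_
      rw [Real.norm_eq_abs, abs_of_pos (Real.exp_pos _)]
      apply Real.exp_le_exp.2
      calc t * f x ≤ |t * f x| := le_abs_self _
        _ = |t| * |f x| := abs_mul _ _
        _ ≤ |t| * 1 := by
            apply mul_le_mul_of_nonneg_left _ (abs_nonneg t)
            rw [abs_of_nonneg (hb x).1]; exact (hb x).2
        _ = |t| := mul_one _
  have hpt : ∀ x : Ω, Real.exp (t * f x) ≤ 1 - f x + f x * Real.exp t := by
    intro x
    have hx := hb x
    have := convexOn_exp.2 (Set.mem_univ (0 : ℝ)) (Set.mem_univ t)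
      (by linarith [hx.1, hx.2] : (0:ℝ) ≤ 1 - f x) hx.1 (by ring)
    simpa [Real.exp_zero, smul_eq_mul, mul_comm] using this
  calc ∫ x, Real.exp (t * f x) ∂ν ≤ ∫ x, (1 - f x + f x * Real.exp t) ∂ν := by
        apply integral_mono hint _ hpt
        exact ((integrable_const (1:ℝ)).sub hintf).add (hintf.mul_const _)
    _ = 1 - (∫ x, f x ∂ν) + (∫ x, f x ∂ν) * Real.exp t := by
        have h1 : Integrable (fun x => 1 - f x) ν := (integrable_const (1:ℝ)).sub hintf
        rw [integral_add h1 (hintf.mul_const _), integral_sub (integrable_const (1:ℝ)) hintf,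
          integral_mul_const, integral_const]
        simp


lemma onesided
    (Ω : Type*) [MeasurableSpace Ω]
    (ν : Measure Ω) [IsProbabilityMeasure ν]
    (f : Ω → ℝ) (hm : Measurable f) (hb : ∀ ω, f ω ∈ Set.Icc (0 : ℝ) 1)
    (n : ℕ) (hn : 0 < n) (ε : ℝ) (hε : 0 < ε) :
    (Measure.pi fun _ : Fin n => ν)
      {ω | ε < klBer ((n : ℝ)⁻¹ * ∑ i, f (ω i)) (∫ x, f x ∂ν) ∧
           (∫ x, f x ∂ν) ≤ (n : ℝ)⁻¹ * ∑ i, f (ω i)} ≤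
      ENNReal.ofReal (Real.exp (-(n * ε))) := by
  set μ := (Measure.pi fun _ : Fin n => ν) with hμ
  set p := ∫ x, f x ∂ν with hp
  have hnR : (0:ℝ) < n := Nat.cast_pos.2 hn
  have hintf : Integrable f ν := by
    refine Integrable.mono' (integrable_const (1 : ℝ)) hm.aestronglyMeasurable ?_
    exact Filter.Eventually.of_forall fun x => by
      rw [Real.norm_eq_abs, abs_of_nonneg (hb x).1]; exact (hb x).2
  have hp0 : 0 ≤ p := integral_nonneg fun x => (hb x).1
  have hp1 : p ≤ 1 := by
    have := integral_mono hintf (integrable_const (1:ℝ)) (fun x => (hb x).2)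
    simpa using this
  -- empirical mean bounds
  have hphat0 : ∀ ω : Fin n → Ω, 0 ≤ (n : ℝ)⁻¹ * ∑ i, f (ω i) := fun ω =>
    mul_nonneg (by positivity) (Finset.sum_nonneg fun i _ => (hb (ω i)).1)
  have hphat1 : ∀ ω : Fin n → Ω, (n : ℝ)⁻¹ * ∑ i, f (ω i) ≤ 1 := by
    intro ω
    have hs : ∑ i, f (ω i) ≤ (n : ℝ) := by
      calc ∑ i, f (ω i) ≤ ∑ _i : Fin n, (1:ℝ) := Finset.sum_le_sum fun i _ => (hb (ω i)).2
        _ = n := by simp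
    calc (n : ℝ)⁻¹ * ∑ i, f (ω i) ≤ (n : ℝ)⁻¹ * n :=
          mul_le_mul_of_nonneg_left hs (by positivity)
      _ = 1 := inv_mul_cancel₀ hnR.ne'
  rcases eq_or_lt_of_le hp0 with hp0' | hp0'
  · -- p = 0 : event empty
    have : {ω : Fin n → Ω | ε < klBer ((n : ℝ)⁻¹ * ∑ i, f (ω i)) p ∧
        p ≤ (n : ℝ)⁻¹ * ∑ i, f (ω i)} = ∅ := by
      ext ω
      simp only [Set.mem_setOf_eq, Set.mem_empty_iff_false, iff_false, not_and]
      intro h1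
      exfalso
      have hx1 := hphat1 ω
      have hx0 := hphat0 ω
      have hkl : klBer ((n : ℝ)⁻¹ * ∑ i, f (ω i)) p ≤ 0 := by
        rw [← hp0']
        have h2 : klBer ((n : ℝ)⁻¹ * ∑ i, f (ω i)) 0 =
            (1 - ((n : ℝ)⁻¹ * ∑ i, f (ω i))) * Real.log (1 - ((n : ℝ)⁻¹ * ∑ i, f (ω i))) := by
          simp [klBer]
        rw [h2]
        exact mul_nonpos_of_nonneg_of_nonpos (by linarith)
          (Real.log_nonpos (by linarith) (by linarith))
      linarith
    rw [this]
    simp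
  rcases eq_or_lt_of_le hp1 with hp1' | hp1'
  · -- p = 1 : event empty
    have : {ω : Fin n → Ω | ε < klBer ((n : ℝ)⁻¹ * ∑ i, f (ω i)) p ∧
        p ≤ (n : ℝ)⁻¹ * ∑ i, f (ω i)} = ∅ := by
      ext ω
      simp only [Set.mem_setOf_eq, Set.mem_empty_iff_false, iff_false, not_and]
      intro h1 h2
      have hx1 : (n : ℝ)⁻¹ * ∑ i, f (ω i) = 1 := le_antisymm (hphat1 ω) (hp1' ▸ h2)
      rw [hx1, hp1'] at h1
      have : klBer 1 1 = 0 := by simp [klBer]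
      rw [this] at h1
      linarith
    rw [this]
    simp
  -- main case 0 < p < 1
  have h1p : (0:ℝ) < 1 - p := by linarith
  have hcont : Continuous fun x : ℝ => klBer x p := by
    have h1 : (fun x : ℝ => klBer x p) = fun x =>
        p * ((x / p) * Real.log (x / p)) +
        (1 - p) * (((1 - x) / (1 - p)) * Real.log ((1 - x) / (1 - p))) := by
      funext x
      have e1 : p * (x / p) = x := by field_simp
      have e2 : (1 - p) * ((1 - x) / (1 - p)) = 1 - x := by field_simp
      simp only [klBer, ← mul_assoc, e1, e2]
    rw [h1]
    have hc := Real.continuous_mul_log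
    exact (continuous_const.mul (hc.comp (continuous_id.div_const p))).add
      (continuous_const.mul (hc.comp ((continuous_const.sub continuous_id).div_const (1 - p))))
  have hklpp : klBer p p = 0 := by
    simp [klBer, div_self hp0'.ne', div_self h1p.ne']
  set S := Set.Icc p 1 ∩ {x : ℝ | ε ≤ klBer x p} with hS
  have hSclosed : IsClosed S := isClosed_Icc.inter (isClosed_le continuous_const hcont)
  have hSbdd : BddBelow S := ⟨p, fun x hx => hx.1.1⟩
  by_cases hSne : S.Nonempty
  · set q := sInf S with hq
    have hqS : q ∈ S := hSclosed.csInf_mem hSne hSbdd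
    have hqp : p < q := by
      rcases eq_or_lt_of_le hqS.1.1 with h | h
      · exfalso
        have h2 : ε ≤ klBer q p := hqS.2
        rw [← h, hklpp] at h2
        linarith
      · exact h
    have hq1 : q ≤ 1 := hqS.1.2
    have hεq : ε ≤ klBer q p := hqS.2
    have hub : {ω : Fin n → Ω | ε < klBer ((n : ℝ)⁻¹ * ∑ i, f (ω i)) p ∧
        p ≤ (n : ℝ)⁻¹ * ∑ i, f (ω i)} ⊆ {ω | q ≤ (n : ℝ)⁻¹ * ∑ i, f (ω i)} := by
      rintro ω ⟨h1, h2⟩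
      exact csInf_le hSbdd ⟨⟨h2, hphat1 ω⟩, h1.le⟩
    rcases eq_or_lt_of_le hq1 with hq1' | hq1'
    · -- q = 1 : direct product bound
      have hkl1 : klBer 1 p = -Real.log p := by
        simp [klBer, Real.log_div one_ne_zero hp0'.ne']
      have hsub : {ω : Fin n → Ω | ε < klBer ((n : ℝ)⁻¹ * ∑ i, f (ω i)) p ∧
          p ≤ (n : ℝ)⁻¹ * ∑ i, f (ω i)} ⊆ Set.pi Set.univ fun _ : Fin n => f ⁻¹' Set.Ici 1 := by
        intro ω hω
        have h1 : (1:ℝ) ≤ (n : ℝ)⁻¹ * ∑ i, f (ω i) := hq1' ▸ hub hω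
        have hsum : (n:ℝ) ≤ ∑ i, f (ω i) := by
          have := mul_le_mul_of_nonneg_left h1 hnR.le
          rw [← mul_assoc, mul_inv_cancel₀ hnR.ne'] at this
          linarith
        intro i _
        simp only [Set.mem_preimage, Set.mem_Ici]
        by_contra hlt
        push_neg at hlt
        have : ∑ j, f (ω j) < ∑ _j : Fin n, (1:ℝ) :=
          Finset.sum_lt_sum (fun j _ => (hb (ω j)).2) ⟨i, Finset.mem_univ i, hlt⟩
        simp only [Finset.sum_const, Finset.card_univ, Fintype.card_fin, nsmul_eq_mul,
          mul_one] at this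
        linarith
      have hA : MeasurableSet (f ⁻¹' Set.Ici 1) := hm measurableSet_Ici
      have hApi : μ (Set.pi Set.univ fun _ : Fin n => f ⁻¹' Set.Ici 1)
          = (ν (f ⁻¹' Set.Ici 1)) ^ n := by
        rw [hμ, Measure.pi_pi]
        simp
      have hAp : ν (f ⁻¹' Set.Ici 1) ≤ ENNReal.ofReal p := by
        have hind : ∫ x, (f ⁻¹' Set.Ici 1).indicator (fun _ => (1:ℝ)) x ∂ν
            = (ν (f ⁻¹' Set.Ici 1)).toReal := by
          rw [integral_indicator hA]
          simp [measureReal_def]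
        have hmono : ∫ x, (f ⁻¹' Set.Ici 1).indicator (fun _ => (1:ℝ)) x ∂ν ≤ p := by
          apply integral_mono ((integrable_const (1:ℝ)).indicator hA) hintf
          intro x
          by_cases hx : x ∈ f ⁻¹' Set.Ici 1
          · simp only [Set.indicator_of_mem hx]; exact hx
          · simp only [Set.indicator_of_notMem hx]; exact (hb x).1
        rw [hind] at hmono
        calc ν (f ⁻¹' Set.Ici 1) = ENNReal.ofReal ((ν (f ⁻¹' Set.Ici 1)).toReal) := by
              rw [ENNReal.ofReal_toReal (measure_lt_top ν _).ne]
          _ ≤ ENNReal.ofReal p := ENNReal.ofReal_le_ofReal hmono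
      calc μ _ ≤ μ (Set.pi Set.univ fun _ : Fin n => f ⁻¹' Set.Ici 1) := measure_mono hsub
        _ = (ν (f ⁻¹' Set.Ici 1)) ^ n := hApi
        _ ≤ (ENNReal.ofReal p) ^ n := pow_le_pow_left' hAp n
        _ = ENNReal.ofReal (p ^ n) := by rw [ENNReal.ofReal_pow hp0'.le]
        _ ≤ ENNReal.ofReal (Real.exp (-(n * ε))) := by
            apply ENNReal.ofReal_le_ofReal
            have : p ^ n = Real.exp (-((n:ℝ) * klBer 1 p)) := by
              rw [hkl1]
              rw [show -((n:ℝ) * -Real.log p) = (n:ℝ) * Real.log p by ring]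
              rw [Real.exp_nat_mul, Real.exp_log hp0']
            rw [this]
            apply Real.exp_le_exp.2
            have : ε ≤ klBer 1 p := hq1' ▸ hεq
            nlinarith
    · -- q < 1 : Chernoff with optimal t
      have h1q : (0:ℝ) < 1 - q := by linarith
      have hq0 : (0:ℝ) < q := lt_trans hp0' hqp
      have hden : (0:ℝ) < p * (1 - q) := mul_pos hp0' h1q
      set r := q * (1 - p) / (p * (1 - q)) with hr
      have hrpos : 0 < r := div_pos (mul_pos hq0 h1p) hden
      have hr1 : 1 ≤ r := by
        rw [le_div_iff₀ hden]
        nlinarith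
      set t := Real.log r with htdef
      have ht : 0 ≤ t := Real.log_nonneg hr1
      have het : Real.exp t = r := Real.exp_log hrpos
      have hsub : {ω : Fin n → Ω | ε < klBer ((n : ℝ)⁻¹ * ∑ i, f (ω i)) p ∧
          p ≤ (n : ℝ)⁻¹ * ∑ i, f (ω i)} ⊆ {ω | (n:ℝ) * q ≤ ∑ i, f (ω i)} := by
        intro ω hω
        have h1 : q ≤ (n:ℝ)⁻¹ * ∑ i, f (ω i) := hub hω
        have h2 := mul_le_mul_of_nonneg_left h1 hnR.le
        rw [← mul_assoc, mul_inv_cancel₀ hnR.ne', one_mul] at h2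
        exact h2
      have hfrac : (0:ℝ) < (1 - p)/(1 - q) := div_pos h1p h1q
      set L := Real.log ((1-p)/(1-q)) with hLdef
      have hL : Real.exp L = (1 - p)/(1 - q) := Real.exp_log hfrac
      have hc0 : 0 ≤ ∫ x, Real.exp (t * f x) ∂ν :=
        integral_nonneg fun x => (Real.exp_pos _).le
      have hcb : ∫ x, Real.exp (t * f x) ∂ν ≤ (1 - p) / (1 - q) := by
        calc ∫ x, Real.exp (t * f x) ∂ν ≤ 1 - p + p * Real.exp t := mgf_bound Ω ν f hm hb t
          _ = (1-p)/(1-q) := by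
              rw [het, hr]
              field_simp
              ring
      have hT : t = Real.log (q/p) + L := by
        rw [htdef, hLdef, ← Real.log_mul (by positivity) (by positivity)]
        congr 1
        rw [hr, div_mul_div_comm]
      have hklq : klBer q p = q * Real.log (q/p) - (1 - q) * L := by
        have hinv : (1-q)/(1-p) = ((1-p)/(1-q))⁻¹ := by
          rw [inv_div]
        rw [klBer, hinv, Real.log_inv, ← hLdef]
        ring
      have hkey : t * q - L = klBer q p := by rw [hT, hklq]; ring
      calc μ {ω | ε < klBer ((n : ℝ)⁻¹ * ∑ i, f (ω i)) p ∧
            p ≤ (n : ℝ)⁻¹ * ∑ i, f (ω i)}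
          ≤ μ {ω | (n:ℝ)*q ≤ ∑ i, f (ω i)} := measure_mono hsub
        _ ≤ ENNReal.ofReal (Real.exp (-(t * ((n:ℝ)*q))) *
              (∫ x, Real.exp (t * f x) ∂ν) ^ n) := markov_exp Ω ν f hm hb n t ((n:ℝ)*q) ht
        _ ≤ ENNReal.ofReal (Real.exp (-(n*ε))) := by
            apply ENNReal.ofReal_le_ofReal
            have hpow : (∫ x, Real.exp (t * f x) ∂ν) ^ n ≤ Real.exp ((n:ℝ) * L) := by
              calc (∫ x, Real.exp (t * f x) ∂ν) ^ n ≤ ((1-p)/(1-q))^n :=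
                    pow_le_pow_left₀ hc0 hcb n
                _ = (Real.exp L)^n := by rw [hL]
                _ = Real.exp ((n:ℝ)*L) := (Real.exp_nat_mul L n).symm
            calc Real.exp (-(t * ((n:ℝ)*q))) * (∫ x, Real.exp (t * f x) ∂ν) ^ n
                ≤ Real.exp (-(t * ((n:ℝ)*q))) * Real.exp ((n:ℝ) * L) :=
                  mul_le_mul_of_nonneg_left hpow (Real.exp_pos _).le
              _ = Real.exp (-((n:ℝ) * (t * q - L))) := by
                  rw [← Real.exp_add]
                  ring_nf
              _ ≤ Real.exp (-((n:ℝ)*ε)) := by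
                  apply Real.exp_le_exp.2
                  rw [hkey]
                  nlinarith
  · -- S empty : event empty
    have : {ω : Fin n → Ω | ε < klBer ((n : ℝ)⁻¹ * ∑ i, f (ω i)) p ∧
        p ≤ (n : ℝ)⁻¹ * ∑ i, f (ω i)} = ∅ := by
      ext ω
      simp only [Set.mem_setOf_eq, Set.mem_empty_iff_false, iff_false, not_and]
      intro h1 h2
      exact hSne ⟨_, ⟨⟨h2, hphat1 ω⟩, h1.le⟩⟩
    rw [this]
    simp
/-- Chernoff bound via kl: for i.i.d. `[0,1]`-valued random variables with mean
`p` and empirical mean `p̂`, with probability at least `1-δ`,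
`kl(p̂ ‖ p) ≤ ln(2√n/δ)/n`. -/
theorem chernoff_kl_bound
    (Ω : Type*) [MeasurableSpace Ω]
    (ν : Measure Ω) [IsProbabilityMeasure ν]
    (f : Ω → ℝ) (hm : Measurable f) (hb : ∀ ω, f ω ∈ Set.Icc (0 : ℝ) 1)
    (n : ℕ) (hn : 0 < n) (δ : ℝ) (hδ : δ ∈ Set.Ioo (0 : ℝ) 1) :
    1 - ENNReal.ofReal δ ≤
      (Measure.pi fun _ : Fin n => ν)
        {ω | klBer ((n : ℝ)⁻¹ * ∑ i, f (ω i)) (∫ x, f x ∂ν) ≤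
          Real.log (2 * Real.sqrt n / δ) / n} := by
  set μ := (Measure.pi fun _ : Fin n => ν) with hμ
  haveI : IsProbabilityMeasure μ := by rw [hμ]; infer_instance
  set p := ∫ x, f x ∂ν with hp
  set ε := Real.log (2 * Real.sqrt n / δ) / n with hεdef
  have hnR : (0:ℝ) < n := Nat.cast_pos.2 hn
  have hδ0 := hδ.1
  have hδ1 := hδ.2
  have hsq : (1:ℝ) ≤ Real.sqrt n := by
    rw [show (1:ℝ) = Real.sqrt 1 from Real.sqrt_one.symm]
    exact Real.sqrt_le_sqrt (by exact_mod_cast hn)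
  have hsqpos : (0:ℝ) < Real.sqrt n := lt_of_lt_of_le one_pos hsq
  have hratio : 1 < 2 * Real.sqrt n / δ := by
    rw [lt_div_iff₀ hδ0]
    nlinarith
  have hε : 0 < ε := div_pos (Real.log_pos hratio) hnR
  have hnε : Real.exp (-((n:ℝ)*ε)) = δ / (2 * Real.sqrt n) := by
    rw [hεdef, mul_div_cancel₀ _ hnR.ne', Real.exp_neg,
      Real.exp_log (by positivity), inv_div]
  have hintf : Integrable f ν := by
    refine Integrable.mono' (integrable_const (1 : ℝ)) hm.aestronglyMeasurable ?_
    exact Filter.Eventually.of_forall fun x => by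
      rw [Real.norm_eq_abs, abs_of_nonneg (hb x).1]; exact (hb x).2
  -- the lower deviation via 1 - f
  have hminus : μ {ω | ε < klBer ((n:ℝ)⁻¹ * ∑ i, f (ω i)) p ∧
      (n:ℝ)⁻¹ * ∑ i, f (ω i) ≤ p} ≤ ENNReal.ofReal (Real.exp (-((n:ℝ)*ε))) := by
    have hm' : Measurable fun x => 1 - f x := measurable_const.sub hm
    have hb' : ∀ ω, (fun x => 1 - f x) ω ∈ Set.Icc (0:ℝ) 1 := by
      intro ω
      dsimp only
      exact ⟨by linarith [(hb ω).2], by linarith [(hb ω).1]⟩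
    have hint' : ∫ x, (1 - f x) ∂ν = 1 - p := by
      rw [integral_sub (integrable_const 1) hintf, integral_const]
      simp [hp]
    refine le_trans (measure_mono ?_) (onesided Ω ν (fun x => 1 - f x) hm' hb' n hn ε hε)
    rintro ω ⟨h1, h2⟩
    have hsum : (n:ℝ)⁻¹ * ∑ i, (1 - f (ω i)) = 1 - (n:ℝ)⁻¹ * ∑ i, f (ω i) := by
      rw [Finset.sum_sub_distrib, Finset.sum_const, Finset.card_univ, Fintype.card_fin,
        nsmul_eq_mul, mul_one, mul_sub, inv_mul_cancel₀ hnR.ne']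
    have hkl : klBer (1 - ((n:ℝ)⁻¹ * ∑ i, f (ω i))) (1 - p)
        = klBer ((n:ℝ)⁻¹ * ∑ i, f (ω i)) p := by
      simp only [klBer, sub_sub_cancel]
      ring
    constructor
    · show ε < klBer ((n:ℝ)⁻¹ * ∑ i, (1 - f (ω i))) (∫ x, (1 - f x) ∂ν)
      rw [hsum, hint', hkl]
      exact h1
    · show (∫ x, (1 - f x) ∂ν) ≤ (n:ℝ)⁻¹ * ∑ i, (1 - f (ω i))
      rw [hsum, hint']
      linarith
  have hplus := onesided Ω ν f hm hb n hn ε hε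
  -- bad event bound
  have hbad : μ {ω | ε < klBer ((n:ℝ)⁻¹ * ∑ i, f (ω i)) p} ≤ ENNReal.ofReal δ := by
    have hcover : {ω : Fin n → Ω | ε < klBer ((n:ℝ)⁻¹ * ∑ i, f (ω i)) p} ⊆
        {ω | ε < klBer ((n:ℝ)⁻¹ * ∑ i, f (ω i)) p ∧ p ≤ (n:ℝ)⁻¹ * ∑ i, f (ω i)} ∪
        {ω | ε < klBer ((n:ℝ)⁻¹ * ∑ i, f (ω i)) p ∧ (n:ℝ)⁻¹ * ∑ i, f (ω i) ≤ p} := by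
      intro ω h
      rcases le_total p ((n:ℝ)⁻¹ * ∑ i, f (ω i)) with hle | hle
      · exact Or.inl ⟨h, hle⟩
      · exact Or.inr ⟨h, hle⟩
    calc μ _ ≤ _ := measure_mono hcover
      _ ≤ μ {ω | ε < klBer ((n:ℝ)⁻¹ * ∑ i, f (ω i)) p ∧ p ≤ (n:ℝ)⁻¹ * ∑ i, f (ω i)} +
          μ {ω | ε < klBer ((n:ℝ)⁻¹ * ∑ i, f (ω i)) p ∧ (n:ℝ)⁻¹ * ∑ i, f (ω i) ≤ p} :=
            measure_union_le _ _
      _ ≤ ENNReal.ofReal (Real.exp (-((n:ℝ)*ε))) + ENNReal.ofReal (Real.exp (-((n:ℝ)*ε))) :=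
            add_le_add hplus hminus
      _ = ENNReal.ofReal (2 * Real.exp (-((n:ℝ)*ε))) := by
            rw [two_mul, ENNReal.ofReal_add (Real.exp_pos _).le (Real.exp_pos _).le]
      _ ≤ ENNReal.ofReal δ := by
            apply ENNReal.ofReal_le_ofReal
            rw [hnε]
            have h2 : 2 * (δ / (2 * Real.sqrt n)) = δ / Real.sqrt n := by
              field_simp
            rw [h2, div_le_iff₀ hsqpos]
            nlinarith
  have hcompl : (1:ENNReal) ≤ μ {ω | klBer ((n:ℝ)⁻¹ * ∑ i, f (ω i)) p ≤ ε} +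
      μ {ω | ε < klBer ((n:ℝ)⁻¹ * ∑ i, f (ω i)) p} := by
    have huniv : (Set.univ : Set (Fin n → Ω)) ⊆
        {ω | klBer ((n:ℝ)⁻¹ * ∑ i, f (ω i)) p ≤ ε} ∪
        {ω | ε < klBer ((n:ℝ)⁻¹ * ∑ i, f (ω i)) p} := by
      intro ω _
      rcases le_or_gt (klBer ((n:ℝ)⁻¹ * ∑ i, f (ω i)) p) ε with h | h
      · exact Or.inl h
      · exact Or.inr h
    calc (1:ENNReal) = μ Set.univ := (measure_univ).symm
      _ ≤ _ := le_trans (measure_mono huniv) (measure_union_le _ _)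
  calc (1 : ENNReal) - ENNReal.ofReal δ
      ≤ (1 : ENNReal) - μ {ω | ε < klBer ((n:ℝ)⁻¹ * ∑ i, f (ω i)) p} := tsub_le_tsub_left hbad 1
    _ ≤ μ {ω | klBer ((n:ℝ)⁻¹ * ∑ i, f (ω i)) p ≤ ε} := tsub_le_iff_right.mpr hcompl
end

section
/- For binary classification, the C-bound expressed via disagreement and joint error reads: if 2e_ρ + d_ρ < 1 then L(MV_ρ) ≤ 1 − (1 − (2e_ρ + d_ρ))²/(1 − 2d_ρ). -/
open MeasureTheory Finset

/-- The C-bound expressed via the expected disagreement `d_ρ` and the expected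
joint error `e_ρ`: if `2e_ρ + d_ρ < 1`, then
`L(MV_ρ) ≤ 1 - (1 - (2e_ρ + d_ρ))²/(1 - 2d_ρ)`. -/
theorem c_bound_joint_error_disagreement
    (X : Type*) [MeasurableSpace X]
    (μ : Measure (X × ℝ)) [IsProbabilityMeasure μ]
    (H : Type*) [Fintype H]
    (hyp : H → X → ℝ) (hmeas : ∀ h, Measurable (hyp h))
    (hval : ∀ h x, hyp h x = 1 ∨ hyp h x = -1)
    (hlab : ∀ᵐ p ∂μ, p.2 = 1 ∨ p.2 = -1)
    (ρ : H → ℝ) (hρ0 : ∀ h, 0 ≤ ρ h) (hρ1 : ∑ h, ρ h = 1)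
    (e d : ℝ)
    (he : e = ∑ h₁, ∑ h₂, ρ h₁ * ρ h₂ *
        (μ {p | hyp h₁ p.1 ≠ p.2 ∧ hyp h₂ p.1 ≠ p.2}).toReal)
    (hd : d = ∑ h₁, ∑ h₂, ρ h₁ * ρ h₂ *
        (μ {p | hyp h₁ p.1 ≠ hyp h₂ p.1}).toReal)
    (hcond : 2 * e + d < 1) :
    (μ {p | p.2 * ∑ h, ρ h * hyp h p.1 ≤ 0}).toReal ≤
      1 - (1 - (2 * e + d)) ^ 2 / (1 - 2 * d) := by
  classical
  -- the margin function
  set f : X × ℝ → ℝ := fun p => p.2 * ∑ h, ρ h * hyp h p.1 with hfdef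
  -- basic measurability
  have hsum_meas : Measurable fun p : X × ℝ => ∑ h, ρ h * hyp h p.1 :=
    Finset.measurable_sum _ fun h _ => ((hmeas h).comp measurable_fst).const_mul (ρ h)
  have hfm : Measurable f := measurable_snd.mul hsum_meas
  -- the relevant sets
  have hErr : ∀ h, MeasurableSet {p : X × ℝ | hyp h p.1 ≠ p.2} := fun h =>
    (measurableSet_eq_fun ((hmeas h).comp measurable_fst) measurable_snd).compl
  have hDis : ∀ h₁ h₂, MeasurableSet {p : X × ℝ | hyp h₁ p.1 ≠ hyp h₂ p.1} := fun h₁ h₂ =>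
    (measurableSet_eq_fun ((hmeas h₁).comp measurable_fst)
      ((hmeas h₂).comp measurable_fst)).compl
  have hJnt : ∀ h₁ h₂, MeasurableSet {p : X × ℝ | hyp h₁ p.1 ≠ p.2 ∧ hyp h₂ p.1 ≠ p.2} :=
    fun h₁ h₂ => (hErr h₁).inter (hErr h₂)
  -- abbreviations for the basic probabilities
  set E : H → ℝ := fun h => (μ {p : X × ℝ | hyp h p.1 ≠ p.2}).toReal with hEdef
  set D : H → H → ℝ := fun h₁ h₂ => (μ {p : X × ℝ | hyp h₁ p.1 ≠ hyp h₂ p.1}).toReal with hDdef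
  set J : H → H → ℝ := fun h₁ h₂ =>
    (μ {p : X × ℝ | hyp h₁ p.1 ≠ p.2 ∧ hyp h₂ p.1 ≠ p.2}).toReal with hJdef
  -- integral of an indicator
  have hind_int : ∀ (s : Set (X × ℝ)), MeasurableSet s →
      Integrable (s.indicator fun _ => (1 : ℝ)) μ := fun s hs =>
    (integrable_const (1 : ℝ)).indicator hs
  have hind : ∀ (s : Set (X × ℝ)), MeasurableSet s →
      ∫ p, s.indicator (fun _ => (1 : ℝ)) p ∂μ = (μ s).toReal := by
    intro s hs
    rw [integral_indicator_const (1 : ℝ) hs, smul_eq_mul, mul_one]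
    rfl
  -- integrability of the margin and related functions
  have hyh_int : ∀ h, Integrable (fun p : X × ℝ => p.2 * hyp h p.1) μ := by
    intro h
    refine Integrable.mono' (integrable_const 1)
      (measurable_snd.mul ((hmeas h).comp measurable_fst)).aestronglyMeasurable ?_
    filter_upwards [hlab] with p hp
    rcases hval h p.1 with h1 | h1 <;> rcases hp with hy | hy <;>
      simp [h1, hy, abs_mul]
  have hf_bound : ∀ᵐ p ∂μ, ‖f p‖ ≤ 1 := by
    filter_upwards [hlab] with p hp
    have h2 : |∑ h, ρ h * hyp h p.1| ≤ 1 := by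
      calc |∑ h, ρ h * hyp h p.1| ≤ ∑ h, |ρ h * hyp h p.1| := Finset.abs_sum_le_sum_abs _ _
        _ = ∑ h, ρ h := by
            refine Finset.sum_congr rfl fun h _ => ?_
            rcases hval h p.1 with h1 | h1 <;>
              simp [h1, abs_mul, abs_of_nonneg (hρ0 h)]
        _ = 1 := hρ1
    have h1 : |p.2| = 1 := by rcases hp with hy | hy <;> simp [hy]
    calc ‖f p‖ = |p.2| * |∑ h, ρ h * hyp h p.1| := by
          simp [hfdef, abs_mul, Real.norm_eq_abs]
      _ ≤ 1 * 1 := by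
          apply mul_le_mul (le_of_eq h1) h2 (abs_nonneg _)
          norm_num
      _ = 1 := by norm_num
  have hf_int : Integrable f μ :=
    Integrable.mono' (integrable_const 1) hfm.aestronglyMeasurable hf_bound
  have hf2_int : Integrable (fun p => f p ^ 2) μ := by
    refine Integrable.mono' (integrable_const 1) (hfm.pow_const 2).aestronglyMeasurable ?_
    filter_upwards [hf_bound] with p hp
    have h1 : |f p| ≤ 1 := hp
    calc ‖f p ^ 2‖ = |f p| ^ 2 := by rw [Real.norm_eq_abs, abs_pow]
      _ ≤ 1 := by nlinarith [abs_nonneg (f p)]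
  -- first moment: `∫ f = 1 - 2 ∑ ρ h * E h`
  have hI1 : ∀ h, ∫ p, p.2 * hyp h p.1 ∂μ = 1 - 2 * E h := by
    intro h
    have hcong : (fun p : X × ℝ => p.2 * hyp h p.1) =ᵐ[μ]
        fun p => 1 - 2 * ({p : X × ℝ | hyp h p.1 ≠ p.2}.indicator (fun _ => (1 : ℝ)) p) := by
      filter_upwards [hlab] with p hp
      rcases hval h p.1 with h1 | h1 <;> rcases hp with hy | hy <;>
        simp [Set.indicator_apply, h1, hy] <;> norm_num
    rw [integral_congr_ae hcong, integral_sub (integrable_const 1)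
      ((hind_int _ (hErr h)).const_mul 2), integral_const_mul, hind _ (hErr h)]
    simp
    rfl
  have hIf : ∫ p, f p ∂μ = 1 - 2 * ∑ h, ρ h * E h := by
    have hre : f = fun p => ∑ h, ρ h * (p.2 * hyp h p.1) := by
      funext p
      show p.2 * ∑ h, ρ h * hyp h p.1 = _
      rw [Finset.mul_sum]
      exact Finset.sum_congr rfl fun h _ => by ring
    rw [hre, integral_finset_sum _ fun h _ => (hyh_int h).const_mul (ρ h)]
    have : ∀ h, ∫ p, ρ h * (p.2 * hyp h p.1) ∂μ = ρ h * (1 - 2 * E h) := fun h => by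
      rw [integral_const_mul, hI1 h]
    simp_rw [this]
    have expand : ∀ h ∈ (Finset.univ : Finset H), ρ h * (1 - 2 * E h) = ρ h - 2 * (ρ h * E h) :=
      fun h _ => by ring
    rw [Finset.sum_congr rfl expand, Finset.sum_sub_distrib, hρ1, ← Finset.mul_sum]
  -- second moment: `∫ f² = 1 - 2 d`
  have hIf2 : ∫ p, f p ^ 2 ∂μ = 1 - 2 * d := by
    have hcong : (fun p => f p ^ 2) =ᵐ[μ] fun p => ∑ h₁, ∑ h₂, ρ h₁ * ρ h₂ *
        (1 - 2 * ({p : X × ℝ | hyp h₁ p.1 ≠ hyp h₂ p.1}.indicator (fun _ => (1 : ℝ)) p)) := by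
      filter_upwards [hlab] with p hp
      have hy2 : p.2 ^ 2 = 1 := by rcases hp with hy | hy <;> rw [hy] <;> norm_num
      have : f p ^ 2 = (∑ h, ρ h * hyp h p.1) * (∑ h, ρ h * hyp h p.1) := by
        show (p.2 * ∑ h, ρ h * hyp h p.1) ^ 2 = _
        rw [mul_pow, hy2, one_mul, sq]
      rw [this, Finset.sum_mul_sum]
      refine Finset.sum_congr rfl fun h₁ _ => Finset.sum_congr rfl fun h₂ _ => ?_
      rcases hval h₁ p.1 with h1 | h1 <;> rcases hval h₂ p.1 with h2 | h2 <;>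
        simp [Set.indicator_apply, h1, h2] <;> norm_num <;> ring
    have hterm_int : ∀ h₁ h₂ : H, Integrable (fun p : X × ℝ => ρ h₁ * ρ h₂ *
        (1 - 2 * ({p : X × ℝ | hyp h₁ p.1 ≠ hyp h₂ p.1}.indicator (fun _ => (1 : ℝ)) p))) μ :=
      fun h₁ h₂ => (((integrable_const 1).sub
        ((hind_int _ (hDis h₁ h₂)).const_mul 2)).const_mul _)
    rw [integral_congr_ae hcong,
      integral_finset_sum _ fun h₁ _ => integrable_finset_sum _ fun h₂ _ => hterm_int h₁ h₂]
    have hterm : ∀ h₁ h₂ : H, ∫ p, ρ h₁ * ρ h₂ *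
        (1 - 2 * ({p : X × ℝ | hyp h₁ p.1 ≠ hyp h₂ p.1}.indicator (fun _ => (1 : ℝ)) p)) ∂μ
        = ρ h₁ * ρ h₂ - 2 * (ρ h₁ * ρ h₂ * D h₁ h₂) := by
      intro h₁ h₂
      rw [integral_const_mul, integral_sub (integrable_const 1)
        ((hind_int _ (hDis h₁ h₂)).const_mul 2), integral_const_mul, hind _ (hDis h₁ h₂)]
      simp [hDdef]
      ring
    have : ∀ h₁ : H, ∫ p, ∑ h₂, ρ h₁ * ρ h₂ *
        (1 - 2 * ({p : X × ℝ | hyp h₁ p.1 ≠ hyp h₂ p.1}.indicator (fun _ => (1 : ℝ)) p)) ∂μ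
        = ∑ h₂, (ρ h₁ * ρ h₂ - 2 * (ρ h₁ * ρ h₂ * D h₁ h₂)) := by
      intro h₁
      rw [integral_finset_sum _ fun h₂ _ => hterm_int h₁ h₂]
      exact Finset.sum_congr rfl fun h₂ _ => hterm h₁ h₂
    simp_rw [this, Finset.sum_sub_distrib, ← Finset.mul_sum, ← Finset.sum_mul, hρ1]
    have hdD : d = ∑ h₁, ∑ h₂, ρ h₁ * ρ h₂ * D h₁ h₂ := hd
    rw [← hdD]  -- may need adjusting
    ring
  -- the pair identity relating disagreement, joint error and individual errors
  have hpair : ∀ h₁ h₂ : H, D h₁ h₂ + 2 * J h₁ h₂ = E h₁ + E h₂ := by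
    intro h₁ h₂
    have hcong : (fun p : X × ℝ =>
        ({p : X × ℝ | hyp h₁ p.1 ≠ hyp h₂ p.1}.indicator (fun _ => (1 : ℝ)) p) +
          2 * ({p : X × ℝ | hyp h₁ p.1 ≠ p.2 ∧ hyp h₂ p.1 ≠ p.2}.indicator (fun _ => (1 : ℝ)) p))
        =ᵐ[μ] (fun p : X × ℝ =>
        ({p : X × ℝ | hyp h₁ p.1 ≠ p.2}.indicator (fun _ => (1 : ℝ)) p) +
          ({p : X × ℝ | hyp h₂ p.1 ≠ p.2}.indicator (fun _ => (1 : ℝ)) p)) := by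
      filter_upwards [hlab] with p hp
      rcases hval h₁ p.1 with h1 | h1 <;> rcases hval h₂ p.1 with h2 | h2 <;>
        rcases hp with hy | hy <;>
        simp [Set.indicator_apply, h1, h2, hy] <;> norm_num
    have hL : ∫ p, (({p : X × ℝ | hyp h₁ p.1 ≠ hyp h₂ p.1}.indicator (fun _ => (1 : ℝ)) p) +
          2 * ({p : X × ℝ | hyp h₁ p.1 ≠ p.2 ∧ hyp h₂ p.1 ≠ p.2}.indicator (fun _ => (1 : ℝ)) p)) ∂μ
        = D h₁ h₂ + 2 * J h₁ h₂ := by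
      rw [integral_add (hind_int _ (hDis h₁ h₂)) ((hind_int _ (hJnt h₁ h₂)).const_mul 2),
        integral_const_mul, hind _ (hDis h₁ h₂), hind _ (hJnt h₁ h₂)]
    have hR : ∫ p, (({p : X × ℝ | hyp h₁ p.1 ≠ p.2}.indicator (fun _ => (1 : ℝ)) p) +
          ({p : X × ℝ | hyp h₂ p.1 ≠ p.2}.indicator (fun _ => (1 : ℝ)) p)) ∂μ = E h₁ + E h₂ := by
      rw [integral_add (hind_int _ (hErr h₁)) (hind_int _ (hErr h₂)),
        hind _ (hErr h₁), hind _ (hErr h₂)]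
    rw [← hL, ← hR, integral_congr_ae hcong]
  -- hence `2 e + d = 2 ∑ ρ h * E h`
  have hed : 2 * e + d = 2 * ∑ h, ρ h * E h := by
    have heJ : e = ∑ h₁, ∑ h₂, ρ h₁ * ρ h₂ * J h₁ h₂ := he
    have hdD : d = ∑ h₁, ∑ h₂, ρ h₁ * ρ h₂ * D h₁ h₂ := hd
    calc 2 * e + d = ∑ h₁, ∑ h₂, ρ h₁ * ρ h₂ * (E h₁ + E h₂) := by
          rw [heJ, hdD, Finset.mul_sum, ← Finset.sum_add_distrib]
          refine Finset.sum_congr rfl fun h₁ _ => ?_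
          rw [Finset.mul_sum, ← Finset.sum_add_distrib]
          refine Finset.sum_congr rfl fun h₂ _ => ?_
          linear_combination (ρ h₁ * ρ h₂) * (hpair h₁ h₂)
      _ = ∑ h₁, (ρ h₁ * E h₁ * ∑ h₂, ρ h₂) + ∑ h₁, ρ h₁ * ∑ h₂, ρ h₂ * E h₂ := by
          rw [← Finset.sum_add_distrib]
          refine Finset.sum_congr rfl fun h₁ _ => ?_
          rw [Finset.mul_sum, Finset.mul_sum, ← Finset.sum_add_distrib]
          exact Finset.sum_congr rfl fun h₂ _ => by ring
      _ = 2 * ∑ h, ρ h * E h := by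
          rw [hρ1, ← Finset.sum_mul, ← Finset.sum_mul, hρ1]
          ring
  -- abbreviate the two moments
  set m : ℝ := 1 - (2 * e + d) with hmdef
  set s : ℝ := 1 - 2 * d with hsdef
  have hm : ∫ p, f p ∂μ = m := by rw [hIf, hmdef, hed]
  have hs : ∫ p, f p ^ 2 ∂μ = s := hIf2
  have hm0 : 0 < m := by rw [hmdef]; linarith
  have hs0' : 0 ≤ s := by
    rw [← hs]; exact integral_nonneg fun p => sq_nonneg _
  -- the event of interest
  have hA : MeasurableSet {p : X × ℝ | p.2 * ∑ h, ρ h * hyp h p.1 ≤ 0} :=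
    measurableSet_le hfm measurable_const
  set A : Set (X × ℝ) := {p | p.2 * ∑ h, ρ h * hyp h p.1 ≤ 0} with hAdef
  set t : ℝ := (μ A).toReal with htdef
  have ht0 : 0 ≤ t := ENNReal.toReal_nonneg
  have hcompl : (μ Aᶜ).toReal = 1 - t := by
    have h1 : μ A + μ Aᶜ = 1 := by
      rw [measure_add_measure_compl hA, measure_univ]
    have h2 : (μ A).toReal + (μ Aᶜ).toReal = 1 := by
      rw [← ENNReal.toReal_add (measure_ne_top μ A) (measure_ne_top μ Aᶜ), h1]
      simp
    linarith
  have ht1 : t ≤ 1 := by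
    have := ENNReal.toReal_nonneg (a := μ Aᶜ)
    linarith [hcompl]
  -- key Cauchy-Schwarz-type inequality
  have hfA : ∀ p ∈ A, f p ≤ 0 := fun p hp => hp
  have hfB_int : Integrable (Aᶜ.indicator f) μ := hf_int.indicator hA.compl
  have hmfB : m ≤ ∫ p, Aᶜ.indicator f p ∂μ := by
    have hsplit : ∫ p in A, f p ∂μ + ∫ p in Aᶜ, f p ∂μ = ∫ p, f p ∂μ :=
      integral_add_compl hA hf_int
    have hneg : ∫ p in A, f p ∂μ ≤ 0 := setIntegral_nonpos hA hfA
    rw [integral_indicator hA.compl]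
    linarith [hm]
  have key : ∀ c : ℝ, 0 < c → 2 * m ≤ c * s + (1 - t) / c := by
    intro c hc
    have hpt : ∀ p, 2 * Aᶜ.indicator f p ≤
        c * f p ^ 2 + (Aᶜ.indicator (fun _ => (1 : ℝ)) p) / c := by
      intro p
      by_cases hp : p ∈ Aᶜ
      · rw [Set.indicator_of_mem hp, Set.indicator_of_mem hp]
        rw [← sub_nonneg]
        have h9 : c * f p ^ 2 + 1 / c - 2 * f p = (c * f p - 1) ^ 2 / c := by
          field_simp
          ring
        rw [h9]
        exact div_nonneg (sq_nonneg _) hc.le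
      · rw [Set.indicator_of_notMem hp, Set.indicator_of_notMem hp]
        rw [mul_zero, zero_div, add_zero]
        exact mul_nonneg hc.le (sq_nonneg _)
    have hint : ∫ p, 2 * Aᶜ.indicator f p ∂μ ≤
        ∫ p, (c * f p ^ 2 + (Aᶜ.indicator (fun _ => (1 : ℝ)) p) / c) ∂μ :=
      integral_mono (hfB_int.const_mul 2)
        ((hf2_int.const_mul c).add ((hind_int _ hA.compl).div_const c)) hpt
    rw [integral_const_mul] at hint
    rw [integral_add (hf2_int.const_mul c) ((hind_int _ hA.compl).div_const c),
      integral_const_mul, integral_div, hind _ hA.compl, hcompl, hs] at hint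
    linarith [hmfB]
  -- positivity of the second moment
  have hspos : 0 < s := by
    rcases lt_or_eq_of_le hs0' with h | h
    · exact h
    · exfalso
      have hk := key (2 / m) (div_pos two_pos hm0)
      rw [← h, mul_zero, zero_add, div_div_eq_mul_div] at hk
      nlinarith [mul_nonneg ht0 (le_of_lt hm0)]
  -- conclude via Cantelli / second-moment argument
  have hk := key (m / s) (div_pos hm0 hspos)
  have h1 : (m / s) * s = m := by field_simp
  have h2 : (1 - t) / (m / s) = (1 - t) * s / m := div_div_eq_mul_div _ _ _
  rw [h1, h2] at hk
  have h4 : m ≤ (1 - t) * s / m := by linarith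
  rw [le_div_iff₀ hm0] at h4
  have h5 : m ^ 2 / s ≤ 1 - t := by
    rw [div_le_iff₀ hspos]
    nlinarith [h4]
  linarith
end
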